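/- arXiv:1501.07091 — 3 statements merged into one kernel-verified Lean document; each statement's English description precedes it below -/
import Mathlib

section
/- In the setting of the reverse-chain representation, for any $1 \le p \le N - n^*$ and any bounded measurable $f_p: \mathbb{R}^{d\times p} \to \mathbb{R}$, $\mathbb{E}\big[f_p(Y^{y;N}_p, \ldots, Y^{y;N}_1)\,\mathcal{Y}^{y;N}_p\big] = \int f_p(y_{N-p}, \ldots, y_{N-1}) \prod_{i=N-p+1}^{N} p_{i-1}(y_{i-1}, y_i)\,dy_{N-p}\cdots dy_{N-1}$, where $y_N := y$ and $p_{i-1} := p_{i-1,i}$ are the one-step transition densities. -/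
open MeasureTheory

/-- Extend a finite trajectory `z : Fin m → ℝᵈ` to a path `ℕ → ℝᵈ` started at `y`. -/
noncomputable def revTraj {d m : ℕ} (y : Fin d → ℝ) (z : Fin m → (Fin d → ℝ)) :
    ℕ → (Fin d → ℝ) :=
  fun k => if h : 1 ≤ k ∧ k ≤ m then z ⟨k - 1, by omega⟩ else y

noncomputable def auxQ {d : ℕ} (q : ℕ → (Fin d → ℝ) → (Fin d → ℝ) → ℝ) (P : ℕ)
    (y : Fin d → ℝ) (z : Fin P → (Fin d → ℝ)) : ℝ :=
  ∏ k ∈ Finset.range P, q k (revTraj y z k) (revTraj y z (k + 1))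

noncomputable def auxG {d : ℕ} (ψ : ℕ → (Fin d → ℝ) → (Fin d → ℝ) → ℝ) (P : ℕ)
    (f : (Fin P → (Fin d → ℝ)) → ℝ) (y : Fin d → ℝ) (z : Fin P → (Fin d → ℝ)) : ℝ :=
  f (fun j : Fin P => revTraj y z (P - (j : ℕ))) *
    ∏ k ∈ Finset.range P, ψ k (revTraj y z k) (revTraj y z (k + 1))

noncomputable def auxR {d : ℕ} (N : ℕ) (p1 : ℕ → (Fin d → ℝ) → (Fin d → ℝ) → ℝ) (P : ℕ)
    (f : (Fin P → (Fin d → ℝ)) → ℝ) (y : Fin d → ℝ) (z : Fin P → (Fin d → ℝ)) : ℝ :=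
  f (fun j : Fin P => revTraj y z (P - (j : ℕ))) *
    ∏ k ∈ Finset.range P, p1 (N - k - 1) (revTraj y z (k + 1)) (revTraj y z k)

lemma revTraj_mid {d m : ℕ} (y : Fin d → ℝ) (z : Fin m → (Fin d → ℝ)) (k : ℕ)
    (h1 : 1 ≤ k) (h2 : k ≤ m) : revTraj y z k = z ⟨k - 1, by omega⟩ := by
  simp [revTraj, h1, h2]

lemma revTraj_out {d m : ℕ} (y : Fin d → ℝ) (z : Fin m → (Fin d → ℝ)) (k : ℕ)
    (h : ¬ (1 ≤ k ∧ k ≤ m)) : revTraj y z k = y := by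
  simp [revTraj, h]

lemma revTraj_meas {d m : ℕ} (y : Fin d → ℝ) (k : ℕ) :
    Measurable fun z : Fin m → (Fin d → ℝ) => revTraj y z k := by
  unfold revTraj
  by_cases h : 1 ≤ k ∧ k ≤ m
  · simp only [dif_pos h]; exact measurable_pi_apply _
  · simp only [dif_neg h]; exact measurable_const

/-- Induction identity (2) in the proof of the key theorem: for `1 ≤ P ≤ N - n⁎` and
bounded measurable `f_P : ℝ^{d×P} → ℝ`,
`E[f_P(Y_P^{y;N}, …, Y_1^{y;N}) 𝒴_P^{y;N}]
  = ∫ f_P(y_{N-P}, …, y_{N-1}) ∏_{i=N-P+1}^{N} p_{i-1}(y_{i-1}, y_i) dy_{N-P} ⋯ dy_{N-1}`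
with `y_N := y`, where `p1 i = p_{i,i+1}` are the one-step transition densities.
In the right-hand side, `z j` encodes `y_{N-P+j}`. -/
theorem stmt3
    {d : ℕ} (N nstar : ℕ)
    (p1 : ℕ → (Fin d → ℝ) → (Fin d → ℝ) → ℝ)
    (hp1_meas : ∀ i, Measurable (Function.uncurry (p1 i)))
    (hp1_nonneg : ∀ i x y, 0 ≤ p1 i x y)
    (ψ : ℕ → (Fin d → ℝ) → (Fin d → ℝ) → ℝ)
    (hψ_nonneg : ∀ m y z, 0 ≤ ψ m y z)
    (q : ℕ → (Fin d → ℝ) → (Fin d → ℝ) → ℝ)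
    (hψq : ∀ m, m < N → ∀ y z, ψ m y z * q m y z = p1 (N - m - 1) z y)
    (hq_nonneg : ∀ m y z, 0 ≤ q m y z)
    (hq_dens : ∀ m, m < N → ∀ y, (∫ z, q m y z) = 1)
    (y : Fin d → ℝ)
    (ν : Measure (ℕ → (Fin d → ℝ))) [IsProbabilityMeasure ν]
    -- `ν` is the law of the reverse chain `Y^{y;N}` started at `y` with
    -- one-step transition densities `q`.
    (hlaw : ∀ (m : ℕ), m ≤ N → ∀ (F : (ℕ → (Fin d → ℝ)) → ℝ),
      Measurable F → (∃ C, ∀ ω, |F ω| ≤ C) →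
      (∀ ω ω', (∀ k, k ≤ m → ω k = ω' k) → F ω = F ω') →
      ∫ ω, F ω ∂ν =
        ∫ z : Fin m → (Fin d → ℝ),
          F (revTraj y z) *
            ∏ k ∈ Finset.range m, q k (revTraj y z k) (revTraj y z (k + 1)))
    (P : ℕ) (hP1 : 1 ≤ P) (hP2 : P ≤ N - nstar)
    (f : (Fin P → (Fin d → ℝ)) → ℝ)
    (hf_meas : Measurable f) (hf_bdd : ∃ C, ∀ v, |f v| ≤ C) :
    (∫ ω, f (fun j : Fin P => ω (P - (j : ℕ))) *
        ∏ k ∈ Finset.range P, ψ k (ω k) (ω (k + 1)) ∂ν)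
      = ∫ z : Fin P → (Fin d → ℝ),
          f z * ∏ i : Fin P,
            p1 (N - P + (i : ℕ))
              ((Fin.snoc z y : Fin (P + 1) → Fin d → ℝ) i.castSucc)
              ((Fin.snoc z y : Fin (P + 1) → Fin d → ℝ) i.succ) := by
  classical
  have hPN : P ≤ N := by omega
  -- the projection onto coordinates 1..P
  set Pi : (ℕ → (Fin d → ℝ)) → (Fin P → (Fin d → ℝ)) :=
    fun ω j => ω ((j : ℕ) + 1) with hPi_def
  have hPi_meas : Measurable Pi :=
    measurable_pi_lambda _ fun j => measurable_pi_apply _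
  have hPiT : ∀ z : Fin P → (Fin d → ℝ), Pi (revTraj y z) = z := by
    intro z; funext j
    have hj := revTraj_mid y z ((j : ℕ) + 1) (by omega) (by omega)
    simp only [hPi_def]
    rw [hj]
    exact congrArg z (Fin.ext (by simp))
  -- coordinates of revTraj ∘ Pi
  have hcoord : ∀ ω : ℕ → (Fin d → ℝ), ω 0 = y → ∀ k, k ≤ P →
      revTraj y (Pi ω) k = ω k := by
    intro ω h0 k hk
    rcases Nat.eq_zero_or_pos k with hk0 | hk1
    · subst hk0
      rw [revTraj_out y _ 0 (by omega), h0]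
    · rw [revTraj_mid y _ k hk1 hk]
      simp only [hPi_def]
      exact congrArg ω (show k - 1 + 1 = k by omega)
  -- ν-a.e., ω 0 = y
  have hy0 : ∀ᵐ ω ∂ν, ω 0 = y := by
    have hFm : Measurable fun ω : ℕ → (Fin d → ℝ) => min (dist (ω 0) y) 1 :=
      ((measurable_pi_apply 0).dist measurable_const).min measurable_const
    have h := hlaw 0 (Nat.zero_le N) (fun ω => min (dist (ω 0) y) 1) hFm
      ⟨1, fun ω => by
        rw [abs_of_nonneg (le_min dist_nonneg zero_le_one)]
        exact min_le_right _ _⟩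
      (fun ω ω' hh => by simp only [hh 0 le_rfl])
    have hT0 : ∀ z : Fin 0 → (Fin d → ℝ), revTraj y z 0 = y := fun z =>
      revTraj_out y z 0 (by omega)
    simp only [Finset.range_zero, Finset.prod_empty, mul_one] at h
    have h0 : ∫ ω, min (dist (ω 0) y) 1 ∂ν = 0 := by
      rw [h]
      have : ∀ z : Fin 0 → (Fin d → ℝ), min (dist (revTraj y z 0) y) 1 = 0 := by
        intro z; rw [hT0 z]; simp
      simp [this]
    have hint : Integrable (fun ω => min (dist (ω 0) y) 1) ν :=
      Integrable.mono' (integrable_const 1) hFm.aestronglyMeasurable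
        (Filter.Eventually.of_forall fun ω => by
          rw [Real.norm_eq_abs, abs_of_nonneg (le_min dist_nonneg zero_le_one)]
          exact min_le_right _ _)
    have hz := (integral_eq_zero_iff_of_nonneg
      (fun ω => le_min dist_nonneg zero_le_one) hint).mp h0
    filter_upwards [hz] with ω hω
    have : dist (ω 0) y = 0 := by
      rcases min_cases (dist (ω 0) y) 1 with ⟨h1, _⟩ | ⟨h1, _⟩
      · rw [← h1]; exact hω
      · exfalso; rw [h1] at hω; norm_num at hω
    exact dist_eq_zero.mp this
  -- the density Q integrates to 1, hence is integrable (and a.e. strongly measurable)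
  have hQ1 : ∫ z, auxQ q P y z = 1 := by
    have h := hlaw P hPN (fun _ => (1 : ℝ)) measurable_const
      ⟨1, fun ω => by norm_num⟩ (fun _ _ _ => rfl)
    simp only [one_mul] at h
    have h1 : ∫ _ω, (1 : ℝ) ∂ν = 1 := by simp
    rw [h1] at h
    exact h.symm
  have hQ_nonneg : ∀ z, 0 ≤ auxQ q P y z := fun z =>
    Finset.prod_nonneg fun k _ => hq_nonneg _ _ _
  have hQint : Integrable (auxQ q P y) := by
    by_contra hc
    rw [integral_undef hc] at hQ1
    norm_num at hQ1
  obtain ⟨Qm, hQm_meas, hQae⟩ :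
      ∃ Qm : (Fin P → (Fin d → ℝ)) → ℝ, Measurable Qm ∧ auxQ q P y =ᵐ[volume] Qm :=
    ⟨hQint.1.mk _, hQint.1.stronglyMeasurable_mk.measurable, hQint.1.ae_eq_mk⟩
  have hQm_int : Integrable Qm := hQint.congr hQae
  have hQm_nonneg : ∀ᵐ z, 0 ≤ Qm z := by
    filter_upwards [hQae] with z hz
    rw [← hz]; exact hQ_nonneg z
  -- identification of the law of (ω 1, …, ω P)
  have hμ : ν.map Pi = volume.withDensity fun z => ENNReal.ofReal (Qm z) := by
    refine Measure.ext fun A hA => ?_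
    rw [Measure.map_apply hPi_meas hA, withDensity_apply _ hA]
    have hFm : Measurable fun ω => Set.indicator (Pi ⁻¹' A) (fun _ => (1 : ℝ)) ω :=
      measurable_const.indicator (hPi_meas hA)
    have h := hlaw P hPN (fun ω => Set.indicator (Pi ⁻¹' A) (fun _ => (1 : ℝ)) ω) hFm
      ⟨1, fun ω => by
        by_cases hω : ω ∈ Pi ⁻¹' A <;> simp [Set.indicator_apply, hω]⟩
      (fun ω ω' hh => by
        have : Pi ω = Pi ω' := by
          funext j; exact hh ((j : ℕ) + 1) (by omega)
        simp only [Set.indicator_apply, Set.mem_preimage, this])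
    have hL : ∫ ω, Set.indicator (Pi ⁻¹' A) (fun _ => (1 : ℝ)) ω ∂ν
        = (ν (Pi ⁻¹' A)).toReal := by
      rw [integral_indicator_const (1 : ℝ) (hPi_meas hA)]; simp; rfl
    have hR : (∫ z : Fin P → (Fin d → ℝ),
        Set.indicator (Pi ⁻¹' A) (fun _ => (1 : ℝ)) (revTraj y z) *
          ∏ k ∈ Finset.range P, q k (revTraj y z k) (revTraj y z (k + 1)))
        = ∫ z in A, auxQ q P y z := by
      rw [← integral_indicator hA]
      congr 1
      funext z
      by_cases hz : z ∈ A
      · have : revTraj y z ∈ Pi ⁻¹' A := by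
          simp only [Set.mem_preimage, hPiT z]; exact hz
        simp [Set.indicator_apply, this, hz, auxQ]
      · have : revTraj y z ∉ Pi ⁻¹' A := by
          simp only [Set.mem_preimage, hPiT z]; exact hz
        simp [Set.indicator_apply, this, hz]
    rw [hL, hR] at h
    have hAint : ∫ z in A, auxQ q P y z = ∫ z in A, Qm z :=
      integral_congr_ae (ae_restrict_of_ae hQae)
    have hlin : ∫⁻ z in A, ENNReal.ofReal (Qm z) = ENNReal.ofReal (∫ z in A, Qm z) :=
      (ofReal_integral_eq_lintegral_ofReal hQm_int.restrict
        (ae_restrict_of_ae hQm_nonneg)).symm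
    rw [hlin, ← hAint, ← h, ENNReal.ofReal_toReal (measure_ne_top ν _)]
  -- measurable version of the ψ-product-integrand
  have hR_meas : Measurable (auxR N p1 P f y) := by
    apply Measurable.mul
    · exact hf_meas.comp (measurable_pi_lambda _ fun j => revTraj_meas y _)
    · exact Finset.measurable_prod _ fun k _ =>
        (hp1_meas _).comp ((revTraj_meas y _).prodMk (revTraj_meas y _))
  set Gt : (Fin P → (Fin d → ℝ)) → ℝ :=
    fun z => if Qm z = 0 then 0 else auxR N p1 P f y z / Qm z with hGt_def
  have hGt_meas : Measurable Gt := by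
    apply Measurable.ite (hQm_meas (measurableSet_singleton 0)) measurable_const
    exact hR_meas.div hQm_meas
  -- pointwise: auxG * auxQ = auxR
  have hgq : ∀ z, auxG ψ P f y z * auxQ q P y z = auxR N p1 P f y z := by
    intro z
    unfold auxG auxQ auxR
    rw [mul_assoc, ← Finset.prod_mul_distrib]
    congr 1
    refine Finset.prod_congr rfl fun k hk => ?_
    exact hψq k (by have := Finset.mem_range.mp hk; omega) _ _
  -- a.e. equality of auxG and Gt under the law μ
  have hac : ν.map Pi ≪ (volume : Measure (Fin P → (Fin d → ℝ))) := by
    rw [hμ]; exact withDensity_absolutelyContinuous _ _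
  have hQae_μ : auxQ q P y =ᵐ[ν.map Pi] Qm := hQae.filter_mono hac.ae_le
  have hQm_ne_μ : ∀ᵐ z ∂(ν.map Pi), Qm z ≠ 0 := by
    rw [ae_iff]
    simp only [ne_eq, not_not]
    have hB : MeasurableSet {z | Qm z = 0} := hQm_meas (measurableSet_singleton 0)
    rw [hμ, withDensity_apply _ hB]
    rw [setLIntegral_congr_fun hB (fun z hz => by
      rw [Set.mem_setOf_eq] at hz
      show ENNReal.ofReal (Qm z) = 0
      rw [hz]
      simp : Set.EqOn (fun z => ENNReal.ofReal (Qm z)) (fun _ => 0) {z | Qm z = 0})]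
    simp
  have hgGt : auxG ψ P f y =ᵐ[ν.map Pi] Gt := by
    filter_upwards [hQae_μ, hQm_ne_μ] with z h1 h2
    rw [hGt_def]
    simp only [if_neg h2]
    rw [← hgq z, h1, mul_div_cancel_right₀ _ h2]
  -- step A : the LHS integrand equals Gt ∘ Pi a.e.
  have hcomp : (fun ω => auxG ψ P f y (Pi ω)) =ᵐ[ν] fun ω => Gt (Pi ω) :=
    ae_eq_comp hPi_meas.aemeasurable hgGt
  have hstepA : (fun ω => f (fun j : Fin P => ω (P - (j : ℕ))) *
      ∏ k ∈ Finset.range P, ψ k (ω k) (ω (k + 1))) =ᵐ[ν] fun ω => Gt (Pi ω) := by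
    filter_upwards [hy0, hcomp] with ω h0 hc
    rw [← hc]
    unfold auxG
    congr 1
    · congr 1
      funext j
      rw [hcoord ω h0 (P - (j : ℕ)) (by omega)]
    · refine Finset.prod_congr rfl fun k hk => ?_
      simp only [Finset.mem_range] at hk
      rw [hcoord ω h0 k (by omega), hcoord ω h0 (k + 1) (by omega)]
  -- step B-E : compute the integral
  have hmain : (∫ ω, f (fun j : Fin P => ω (P - (j : ℕ))) *
      ∏ k ∈ Finset.range P, ψ k (ω k) (ω (k + 1)) ∂ν) = ∫ z, auxR N p1 P f y z := by
    rw [integral_congr_ae hstepA]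
    rw [← integral_map hPi_meas.aemeasurable hGt_meas.aestronglyMeasurable]
    rw [hμ]
    have hofReal : (fun z => ENNReal.ofReal (Qm z))
        = fun z => ((Real.toNNReal (Qm z)) : ENNReal) := rfl
    rw [hofReal, integral_withDensity_eq_integral_smul hQm_meas.real_toNNReal Gt]
    refine integral_congr_ae ?_
    filter_upwards [hQae] with z hz
    rw [NNReal.smul_def, smul_eq_mul, Real.coe_toNNReal _ (by rw [← hz]; exact hQ_nonneg z)]
    rw [hGt_def]
    by_cases h0 : Qm z = 0
    · simp only [h0, if_pos rfl, mul_zero, ← hgq z, hz, h0, zero_mul, mul_zero]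
    · simp only [if_neg h0]
      rw [mul_comm, div_mul_cancel₀ _ h0]
  rw [hmain]
  -- step F : reindex by Fin.rev
  set φ : (Fin P → (Fin d → ℝ)) ≃ᵐ (Fin P → (Fin d → ℝ)) :=
    MeasurableEquiv.piCongrLeft (fun _ : Fin P => (Fin d → ℝ)) Fin.revPerm with hφ_def
  have hφ_apply : ∀ (w : Fin P → (Fin d → ℝ)) (j : Fin P), φ w j = w j.rev := by
    intro w j
    have h := MeasurableEquiv.piCongrLeft_apply_apply
      (Fin.revPerm : Equiv.Perm (Fin P)) (β := fun _ : Fin P => (Fin d → ℝ)) w j.rev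
    rwa [Fin.revPerm_apply, Fin.rev_rev] at h
  have hrev : MeasurePreserving φ volume volume :=
    volume_measurePreserving_piCongrLeft (fun _ : Fin P => (Fin d → ℝ)) Fin.revPerm
  have hcv := hrev.integral_comp' (f := φ)
    (fun z : Fin P → (Fin d → ℝ) => f z * ∏ i : Fin P,
      p1 (N - P + (i : ℕ))
        ((Fin.snoc z y : Fin (P + 1) → Fin d → ℝ) i.castSucc)
        ((Fin.snoc z y : Fin (P + 1) → Fin d → ℝ) i.succ))
  rw [← hcv]
  refine integral_congr_ae (Filter.Eventually.of_forall fun w => ?_)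
  show auxR N p1 P f y w = f (φ w) * ∏ i : Fin P,
      p1 (N - P + (i : ℕ))
        ((Fin.snoc (φ w) y : Fin (P + 1) → Fin d → ℝ) i.castSucc)
        ((Fin.snoc (φ w) y : Fin (P + 1) → Fin d → ℝ) i.succ)
  unfold auxR
  congr 1
  · refine congrArg f (funext fun j => ?_)
    rw [hφ_apply w j, revTraj_mid y w (P - (j : ℕ)) (by omega) (by omega)]
    exact congrArg w (Fin.ext (by rw [Fin.val_rev]; simp only [Fin.val_mk]; omega))
  · rw [← Fin.prod_univ_eq_prod_range
      (fun k : ℕ => p1 (N - k - 1) (revTraj y w (k + 1)) (revTraj y w k)) P]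
    rw [← Equiv.prod_comp (Fin.revPerm : Equiv.Perm (Fin P))
      (fun i : Fin P => p1 (N - (i : ℕ) - 1) (revTraj y w ((i : ℕ) + 1)) (revTraj y w (i : ℕ)))]
    refine Finset.prod_congr rfl fun i _ => ?_
    simp only [Fin.revPerm_apply, Fin.val_rev]
    have e1 : N - (P - ((i : ℕ) + 1)) - 1 = N - P + (i : ℕ) := by
      have := i.isLt; omega
    have e2 : revTraj y w (P - ((i : ℕ) + 1) + 1)
        = (Fin.snoc (φ w) y : Fin (P + 1) → Fin d → ℝ) i.castSucc := by
      rw [Fin.snoc_castSucc, hφ_apply w i,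
        revTraj_mid y w (P - ((i : ℕ) + 1) + 1) (by omega) (by have := i.isLt; omega)]
      exact congrArg w (Fin.ext (by rw [Fin.val_rev]; simp only [Fin.val_mk]; omega))
    have e3 : revTraj y w (P - ((i : ℕ) + 1))
        = (Fin.snoc (φ w) y : Fin (P + 1) → Fin d → ℝ) i.succ := by
      rcases Nat.lt_or_ge ((i : ℕ) + 1) P with h | h
      · rw [show i.succ = Fin.castSucc (⟨(i : ℕ) + 1, h⟩ : Fin P) from Fin.ext (by simp),
          Fin.snoc_castSucc, hφ_apply w _,
          revTraj_mid y w (P - ((i : ℕ) + 1)) (by omega) (by omega)]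
        exact congrArg w (Fin.ext (by rw [Fin.val_rev]; simp only [Fin.val_mk]; omega))
      · have hiP : (i : ℕ) + 1 = P := by have := i.isLt; omega
        rw [show i.succ = Fin.last P from Fin.ext (by simp [hiP]), Fin.snoc_last]
        exact revTraj_out y w _ (by omega)
    rw [e1, e2, e3]
end

section
/- Let $X$ be a random variable supported in a compact set $D \subset \mathbb{R}^d$ with density $p$ bounded by $\|p\|_\infty$. For each $K \in \mathbb{N}$, let $B_1^K, \ldots, B_K^K$ be a measurable partition of $D$ into sets of equal Lebesgue measure $\lambda(D)/K$. Let $X_1, \ldots, X_N$ be i.i.d. copies of $X$ and $N_k := \#\{i \le N : X_i \in B_k^K\}$. Then, as $N, K \to \infty$ with $N = O(K)$, $\mathbb{E}[\max_{k=1,\ldots,K} N_k] = O(\log N / \log\log N)$. -/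
set_option maxHeartbeats 1000000

open MeasureTheory ProbabilityTheory
open scoped Classical ENNReal

lemma aux_measurable_finset_sup {ι Ω' : Type*} [MeasurableSpace Ω'] (s : Finset ι)
    (f : ι → Ω' → ℕ) (hf : ∀ i, Measurable (f i)) :
    Measurable fun ω => s.sup fun i => f i ω := by
  classical
  induction s using Finset.induction_on with
  | empty => simpa using measurable_const
  | insert _ _ ha ih => simpa [Finset.sup_insert] using (hf _).max ih

lemma aux_pow_le_factorial (m : ℕ) : m ^ m ≤ (2 * m).factorial := by
  calc m ^ m ≤ (m + 1) ^ m := Nat.pow_le_pow_left (Nat.le_succ m) m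
    _ ≤ m.factorial * (m + 1) ^ m := Nat.le_mul_of_pos_left _ m.factorial_pos
    _ ≤ (m + m).factorial := Nat.factorial_mul_pow_le_factorial
    _ = (2 * m).factorial := by rw [two_mul]

lemma aux_tail_bound {Ω : Type*} [MeasureSpace Ω] [IsProbabilityMeasure (ℙ : Measure Ω)]
    {E : Type*} [MeasurableSpace E] (X : ℕ → Ω → E) (hX_meas : ∀ i, Measurable (X i))
    (hX_indep : iIndepFun X ℙ)
    (A : Set E) (hA : MeasurableSet A) (q : ℝ≥0∞) (hq : ∀ i, ℙ (X i ⁻¹' A) ≤ q)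
    (N t : ℕ) :
    ℙ {ω | t ≤ (Finset.filter (fun i => X i ω ∈ A) (Finset.range N)).card}
      ≤ (N.choose t) * q ^ t := by
  have hsub : {ω | t ≤ (Finset.filter (fun i => X i ω ∈ A) (Finset.range N)).card}
      ⊆ ⋃ S ∈ (Finset.range N).powersetCard t, ⋂ i ∈ S, X i ⁻¹' A := by
    intro ω hω
    obtain ⟨S, hS, hcard⟩ := Finset.exists_subset_card_eq hω
    refine Set.mem_biUnion (Finset.mem_powersetCard.2
      ⟨hS.trans (Finset.filter_subset _ _), hcard⟩) ?_
    exact Set.mem_iInter₂.2 fun i hi => (Finset.mem_filter.1 (hS hi)).2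
  calc ℙ _ ≤ ℙ (⋃ S ∈ (Finset.range N).powersetCard t, ⋂ i ∈ S, X i ⁻¹' A) :=
        measure_mono hsub
    _ ≤ ∑ S ∈ (Finset.range N).powersetCard t, ℙ (⋂ i ∈ S, X i ⁻¹' A) :=
        measure_biUnion_finset_le _ _
    _ ≤ ∑ _S ∈ (Finset.range N).powersetCard t, q ^ t := by
        refine Finset.sum_le_sum fun S hS => ?_
        have hScard := (Finset.mem_powersetCard.1 hS).2
        have hprod := hX_indep.meas_biInter (S := S) (s := fun i => X i ⁻¹' A)
          (fun i _ => ⟨A, hA, rfl⟩)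
        rw [hprod]
        calc ∏ i ∈ S, ℙ (X i ⁻¹' A) ≤ ∏ _i ∈ S, q := Finset.prod_le_prod' fun i _ => hq i
          _ = q ^ t := by rw [Finset.prod_const, hScard]
    _ = (N.choose t) * q ^ t := by
        rw [Finset.sum_const, Finset.card_powersetCard, Finset.card_range, nsmul_eq_mul]

lemma aux_det (Kr n c1 b F : ℝ) (s : ℕ) (hK : 0 < Kr) (hF : 0 < F)
    (hc1 : 0 ≤ c1) (hn : 0 ≤ n) (hxb : c1 * n / Kr ≤ b) (hc1b : c1 ≤ b) :
    Kr * ((n ^ (s + 1) / F) * (c1 / Kr) ^ (s + 1)) ≤ n * b ^ (s + 1) / F := by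
  have hx0 : 0 ≤ c1 * n / Kr := by positivity
  have e : Kr * ((n ^ (s + 1) / F) * (c1 / Kr) ^ (s + 1))
      = (c1 * n) * (c1 * n / Kr) ^ s / F := by
    field_simp
    have hK' : Kr * Kr⁻¹ = 1 := mul_inv_cancel₀ hK.ne'
    linear_combination (n * n ^ s * c1 * c1 ^ s * Kr⁻¹ ^ s) * hK'
  rw [e]
  have h1 : (c1 * n) * (c1 * n / Kr) ^ s ≤ (b * n) * b ^ s :=
    mul_le_mul (mul_le_mul_of_nonneg_right hc1b hn) (pow_le_pow_left₀ hx0 hxb s)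
      (pow_nonneg hx0 s) (mul_nonneg (hc1.trans hc1b) hn)
  have h2 : (b * n) * b ^ s = n * b ^ (s + 1) := by ring
  calc (c1 * n) * (c1 * n / Kr) ^ s / F ≤ (b * n) * b ^ s / F := by gcongr
    _ = n * b ^ (s + 1) / F := by rw [h2]

/-- Balls-in-bins complexity lemma: if `X₁, …, X_N` are i.i.d. with a bounded density
supported in a compact set `D ⊂ ℝᵈ`, `B K 1, …, B K K` is a measurable partition of `D`
into sets of equal Lebesgue measure `λ(D)/K`, and `N_k` counts samples in bin `k`, then
as `N, K → ∞` with `N = O(K)` one has `E[max_k N_k] = O(log N / log log N)`. -/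
theorem stmt4
    {d : ℕ} {Ω : Type*} [MeasureSpace Ω] [IsProbabilityMeasure (ℙ : Measure Ω)]
    (D : Set (Fin d → ℝ)) (hD : IsCompact D)
    (pdens : (Fin d → ℝ) → ℝ≥0∞) (hpdens_meas : Measurable pdens)
    (Cp : ℝ≥0∞) (hCp : Cp ≠ ⊤) (hpdens_bdd : ∀ x, pdens x ≤ Cp)
    (μ : Measure (Fin d → ℝ)) (hμ : μ = volume.withDensity pdens)
    (hμ_prob : IsProbabilityMeasure μ) (hsupp : μ Dᶜ = 0)
    (B : (K : ℕ) → Fin K → Set (Fin d → ℝ))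
    (hB_meas : ∀ K k, MeasurableSet (B K k))
    (hB_disj : ∀ K, Pairwise (Function.onFun Disjoint (B K)))
    (hB_cover : ∀ K, 0 < K → (⋃ k, B K k) = D)
    (hB_vol : ∀ K, 0 < K → ∀ k, volume (B K k) = volume D / K)
    (X : ℕ → Ω → (Fin d → ℝ)) (hX_meas : ∀ i, Measurable (X i))
    (hX_law : ∀ i, Measure.map (X i) ℙ = μ)
    (hX_indep : iIndepFun X ℙ)
    -- the number of bins `K N` used for sample size `N`, with `N = O(K N)`
    (K : ℕ → ℕ) (hNK : ∃ c : ℝ, ∀ N : ℕ, (N : ℝ) ≤ c * K N) :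
    ∃ C : ℝ, ∀ᶠ N : ℕ in Filter.atTop,
      (∫ ω, ((Finset.univ.sup fun k : Fin (K N) =>
          (Finset.filter (fun i => X i ω ∈ B (K N) k) (Finset.range N)).card : ℕ) : ℝ))
        ≤ C * (Real.log N / Real.log (Real.log N)) := by
  obtain ⟨c₀, hc₀⟩ := hNK
  set c : ℝ := max c₀ 1 with hc_def
  have hc1 : (1:ℝ) ≤ c := le_max_right _ _
  have hcN : ∀ N : ℕ, (N:ℝ) ≤ c * K N := fun N =>
    (hc₀ N).trans (mul_le_mul_of_nonneg_right (le_max_left _ _) (Nat.cast_nonneg _))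
  have hD_meas : MeasurableSet D := hD.isClosed.measurableSet
  have hvolD_ne : volume D ≠ ⊤ := hD.measure_lt_top.ne
  have hCv_ne : Cp * volume D ≠ ⊤ := ENNReal.mul_ne_top hCp hvolD_ne
  have hμ_le : ∀ S : Set (Fin d → ℝ), MeasurableSet S → μ S ≤ Cp * volume S := by
    intro S hS
    rw [hμ, withDensity_apply _ hS]
    calc ∫⁻ x in S, pdens x ≤ ∫⁻ _x in S, Cp := lintegral_mono fun x => hpdens_bdd x
      _ = Cp * volume S := by rw [setLIntegral_const]
  have h1le : (1:ℝ≥0∞) ≤ Cp * volume D := by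
    calc (1:ℝ≥0∞) = μ Set.univ := measure_univ.symm
      _ = μ (D ∪ Dᶜ) := by rw [Set.union_compl_self]
      _ ≤ μ D + μ Dᶜ := measure_union_le _ _
      _ = μ D := by rw [hsupp, add_zero]
      _ ≤ Cp * volume D := hμ_le D hD_meas
  set c1 : ℝ := (Cp * volume D).toReal with hc1_def
  have hc11 : (1:ℝ) ≤ c1 := by
    have h := ENNReal.toReal_mono hCv_ne h1le
    rwa [ENNReal.toReal_one] at h
  set b : ℝ := c1 * c with hb_def
  have hb1 : (1:ℝ) ≤ b := by nlinarith
  have hb0 : (0:ℝ) < b := by linarith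
  -- asymptotic facts
  have hlogt : Filter.Tendsto (fun N : ℕ => Real.log N) Filter.atTop Filter.atTop :=
    Real.tendsto_log_atTop.comp tendsto_natCast_atTop_atTop
  have hyt : Filter.Tendsto (fun N : ℕ => Real.log (Real.log N)) Filter.atTop Filter.atTop :=
    Real.tendsto_log_atTop.comp hlogt
  have ev3 : ∀ᶠ x : ℝ in Filter.atTop, Real.log x + 2 * Real.log b ≤ x / 2 := by
    have h1 : ∀ᶠ x : ℝ in Filter.atTop, ‖Real.log x‖ ≤ (1/4) * ‖x‖ :=
      Real.isLittleO_log_id_atTop.def (by norm_num)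
    filter_upwards [h1, Filter.eventually_ge_atTop (0:ℝ),
      Filter.eventually_ge_atTop (8 * Real.log b)] with x hx hx0 hx8
    rw [Real.norm_eq_abs, Real.norm_eq_abs, abs_of_nonneg hx0] at hx
    have h2 : Real.log x ≤ (1/4) * x := (le_abs_self _).trans hx
    linarith
  refine ⟨12, ?_⟩
  filter_upwards [hyt.eventually_ge_atTop 1, hlogt.eventually_ge_atTop 1,
    hyt.eventually ev3, Filter.eventually_ge_atTop 1] with N hy1 hl1 hbd hN1
  set y : ℝ := Real.log (Real.log N) with hy_def
  set L : ℝ := Real.log N / y with hL_def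
  have hy0 : (0:ℝ) < y := lt_of_lt_of_le one_pos hy1
  have hl0 : (0:ℝ) < Real.log N := lt_of_lt_of_le one_pos hl1
  have hyl : y ≤ Real.log N := Real.log_le_self hl0.le
  have hL1 : (1:ℝ) ≤ L := (one_le_div hy0).2 hyl
  have hL0 : (0:ℝ) < L := lt_of_lt_of_le one_pos hL1
  set m : ℕ := ⌈(5:ℝ) * L⌉₊ with hm_def
  have hm5 : 5 * L ≤ (m:ℝ) := Nat.le_ceil _
  have hm6 : (m:ℝ) ≤ 6 * L := by
    have h := Nat.ceil_lt_add_one (by positivity : (0:ℝ) ≤ 5 * L)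
    have h2 : (m:ℝ) < 5 * L + 1 := h
    linarith
  have hm0 : 0 < m := Nat.ceil_pos.2 (by positivity)
  have hm1R : (1:ℝ) ≤ m := by exact_mod_cast hm0
  have hN0R : (0:ℝ) < N := by exact_mod_cast hN1
  have hK0 : 0 < K N := by
    rcases Nat.eq_zero_or_pos (K N) with h | h
    · exfalso
      have h2 := hcN N
      rw [h] at h2
      simp at h2
      linarith
    · exact h
  have hKR : (0:ℝ) < K N := by exact_mod_cast hK0
  -- key exponential inequality
  have hlogm : y / 2 ≤ Real.log ((m:ℝ) / b ^ 2) := by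
    have h2 : Real.log L ≤ Real.log (m:ℝ) := by
      apply Real.log_le_log hL0
      linarith
    have h3 : Real.log ((m:ℝ) / b ^ 2) = Real.log (m:ℝ) - 2 * Real.log b := by
      rw [Real.log_div (by positivity) (by positivity), Real.log_pow]
      push_cast; ring
    have hlogL : Real.log L = y - Real.log y := by
      rw [hL_def, Real.log_div hl0.ne' hy0.ne', hy_def]
    linarith
  have hkey : (N:ℝ) ^ 2 ≤ ((m:ℝ) / b ^ 2) ^ m := by
    have hx : (0:ℝ) < (m:ℝ) / b ^ 2 := by positivity
    have e1 : ((m:ℝ) / b ^ 2) ^ m = Real.exp (m * Real.log ((m:ℝ) / b ^ 2)) := by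
      rw [← Real.log_pow, Real.exp_log (pow_pos hx m)]
    have e2 : (N:ℝ) ^ 2 = Real.exp (2 * Real.log N) := by
      have h := Real.exp_log (pow_pos hN0R 2)
      rw [Real.log_pow] at h
      rw [← h]
      norm_num
    rw [e1, e2]
    apply Real.exp_le_exp.2
    have hmul : 5 * L * (y / 2) ≤ (m:ℝ) * Real.log ((m:ℝ) / b ^ 2) :=
      mul_le_mul hm5 hlogm (by linarith) (by positivity)
    have hLy : L * y = Real.log N := div_mul_cancel₀ _ hy0.ne'
    nlinarith
  -- probability bound
  set t : ℕ := 2 * m with ht_def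
  have hq : ∀ (k : Fin (K N)) (i : ℕ),
      ℙ (X i ⁻¹' (B (K N) k)) ≤ Cp * volume D / K N := by
    intro k i
    have hmap : ℙ (X i ⁻¹' (B (K N) k)) = μ (B (K N) k) := by
      rw [← hX_law i, Measure.map_apply (hX_meas i) (hB_meas _ _)]
    rw [hmap]
    calc μ (B (K N) k) ≤ Cp * volume (B (K N) k) := hμ_le _ (hB_meas _ _)
      _ = Cp * (volume D / K N) := by rw [hB_vol _ hK0 k]
      _ = Cp * volume D / K N := by rw [mul_div_assoc]
  have htail : ∀ k : Fin (K N),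
      ℙ {ω | t ≤ (Finset.filter (fun i => X i ω ∈ B (K N) k) (Finset.range N)).card}
        ≤ (N.choose t) * (Cp * volume D / K N) ^ t :=
    fun k => aux_tail_bound X hX_meas hX_indep _ (hB_meas _ _) _ (hq k) N t
  set E : Set Ω := {ω | t ≤ Finset.univ.sup fun k : Fin (K N) =>
      (Finset.filter (fun i => X i ω ∈ B (K N) k) (Finset.range N)).card} with hE_def
  clear_value y L m t E
  have hEsub : E ⊆ ⋃ k ∈ (Finset.univ : Finset (Fin (K N))),
      {ω | t ≤ (Finset.filter (fun i => X i ω ∈ B (K N) k) (Finset.range N)).card} := by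
    intro ω hω
    rw [hE_def] at hω
    have ht0 : (⊥ : ℕ) < t := by
      simp only [bot_eq_zero]; omega
    obtain ⟨k, -, hk⟩ := (Finset.le_sup_iff ht0).1 hω
    exact Set.mem_biUnion (Finset.mem_univ k) hk
  have hPE : ℙ E ≤ (K N : ℝ≥0∞) * ((N.choose t) * (Cp * volume D / K N) ^ t) := by
    calc ℙ E ≤ ℙ (⋃ k ∈ (Finset.univ : Finset (Fin (K N))),
          {ω | t ≤ (Finset.filter (fun i => X i ω ∈ B (K N) k) (Finset.range N)).card}) :=
        measure_mono hEsub
      _ ≤ ∑ k ∈ (Finset.univ : Finset (Fin (K N))),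
          ℙ {ω | t ≤ (Finset.filter (fun i => X i ω ∈ B (K N) k) (Finset.range N)).card} :=
        measure_biUnion_finset_le _ _
      _ ≤ ∑ _k ∈ (Finset.univ : Finset (Fin (K N))),
          (N.choose t : ℝ≥0∞) * (Cp * volume D / K N) ^ t :=
        Finset.sum_le_sum fun k _ => htail k
      _ = (K N : ℝ≥0∞) * ((N.choose t) * (Cp * volume D / K N) ^ t) := by
        rw [Finset.sum_const, Finset.card_univ, Fintype.card_fin, nsmul_eq_mul]
  have hQ_ne : (Cp * volume D / (K N : ℝ≥0∞)) ≠ ⊤ :=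
    (ENNReal.div_lt_top hCv_ne (by exact_mod_cast hK0.ne')).ne
  have hRHS_ne : (K N : ℝ≥0∞) * ((N.choose t) * (Cp * volume D / K N) ^ t) ≠ ⊤ :=
    ENNReal.mul_ne_top (ENNReal.natCast_ne_top _)
      (ENNReal.mul_ne_top (ENNReal.natCast_ne_top _) (ENNReal.pow_ne_top hQ_ne))
  have hPEr : (ℙ E).toReal ≤ (K N : ℝ) * ((N.choose t) * (c1 / K N) ^ t) := by
    calc (ℙ E).toReal ≤ ((K N : ℝ≥0∞) * ((N.choose t) * (Cp * volume D / K N) ^ t)).toReal :=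
        ENNReal.toReal_mono hRHS_ne hPE
      _ = (K N : ℝ) * ((N.choose t) * (c1 / K N) ^ t) := by
        rw [ENNReal.toReal_mul, ENNReal.toReal_mul, ENNReal.toReal_pow, ENNReal.toReal_div]
        simp [hc1_def]
  -- real-number estimates
  have hF0 : (0:ℝ) < ((2 * m).factorial : ℝ) := by exact_mod_cast (2 * m).factorial_pos
  have hxb : c1 * N / K N ≤ b := by
    rw [div_le_iff₀ hKR]
    calc c1 * N ≤ c1 * (c * K N) :=
        mul_le_mul_of_nonneg_left (hcN N) (by linarith)
      _ = b * K N := by rw [hb_def]; ring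
  have hx0 : (0:ℝ) ≤ c1 * N / K N := by positivity
  obtain ⟨s, hs⟩ : ∃ s, t = s + 1 := ⟨t - 1, by omega⟩
  have hstep : (K N : ℝ) * ((N.choose t) * (c1 / K N) ^ t)
      ≤ (N:ℝ) * b ^ t / (2 * m).factorial := by
    have hchoose : (N.choose t : ℝ) ≤ (N:ℝ) ^ t / (2 * m).factorial := by
      rw [ht_def]; exact Nat.choose_le_pow_div _ _
    calc (K N : ℝ) * ((N.choose t) * (c1 / K N) ^ t)
        ≤ (K N : ℝ) * (((N:ℝ) ^ t / (2 * m).factorial) * (c1 / K N) ^ t) := by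
          apply mul_le_mul_of_nonneg_left _ hKR.le
          exact mul_le_mul_of_nonneg_right hchoose (by positivity)
      _ ≤ (N:ℝ) * b ^ t / (2 * m).factorial := by
          rw [hs]
          exact aux_det _ _ _ _ _ s hKR hF0 (by linarith) hN0R.le hxb (by nlinarith)
  have hfact : ((m:ℝ)) ^ m ≤ ((2 * m).factorial : ℝ) := by
    exact_mod_cast aux_pow_le_factorial m
  have hmm0 : (0:ℝ) < (m:ℝ) ^ m := by
    have hmR : (0:ℝ) < (m:ℝ) := by exact_mod_cast hm0
    positivity
  have hPE1 : (ℙ E).toReal ≤ 1 / (N:ℝ) := by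
    have hbt : b ^ t = (b ^ 2) ^ m := by rw [ht_def, pow_mul]
    have h4 : (N:ℝ) * b ^ t / (2 * m).factorial ≤ (N:ℝ) * (b ^ 2 / m) ^ m := by
      rw [hbt, div_pow, ← mul_div_assoc]
      refine div_le_div_of_nonneg_left (by positivity) hmm0 hfact
    have h5 : (b ^ 2 / (m:ℝ)) ^ m ≤ 1 / (N:ℝ) ^ 2 := by
      have e : (b ^ 2 / (m:ℝ)) ^ m = (((m:ℝ) / b ^ 2) ^ m)⁻¹ := by
        rw [← inv_pow, inv_div]
      rw [e, one_div]
      exact inv_anti₀ (pow_pos hN0R 2) hkey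
    have h6 : (N:ℝ) * (b ^ 2 / m) ^ m ≤ (N:ℝ) * (1 / (N:ℝ) ^ 2) :=
      mul_le_mul_of_nonneg_left h5 hN0R.le
    have h7 : (N:ℝ) * (1 / (N:ℝ) ^ 2) = 1 / (N:ℝ) := by
      field_simp
    calc (ℙ E).toReal ≤ (K N : ℝ) * ((N.choose t) * (c1 / K N) ^ t) := hPEr
      _ ≤ (N:ℝ) * b ^ t / (2 * m).factorial := hstep
      _ ≤ (N:ℝ) * (b ^ 2 / m) ^ m := h4
      _ ≤ 1 / (N:ℝ) := h6.trans_eq h7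
  have hNP : (N:ℝ) * (ℙ E).toReal ≤ 1 := by
    calc (N:ℝ) * (ℙ E).toReal ≤ (N:ℝ) * (1 / (N:ℝ)) :=
        mul_le_mul_of_nonneg_left hPE1 hN0R.le
      _ = 1 := mul_one_div_cancel hN0R.ne'
  -- measurability and integral computation
  have hsup_meas : Measurable (fun ω => Finset.univ.sup fun k : Fin (K N) =>
      (Finset.filter (fun i => X i ω ∈ B (K N) k) (Finset.range N)).card) := by
    apply aux_measurable_finset_sup
    intro k
    have heq : (fun ω => (Finset.filter (fun i => X i ω ∈ B (K N) k) (Finset.range N)).card)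
        = fun ω => ∑ i ∈ Finset.range N, if X i ω ∈ B (K N) k then 1 else 0 := by
      funext ω; rw [Finset.card_filter]
    rw [heq]
    exact Finset.measurable_sum _ fun i _ =>
      Measurable.ite (hX_meas i (hB_meas (K N) k)) measurable_const measurable_const
  have hE_meas : MeasurableSet E := by
    rw [hE_def]
    show MeasurableSet ((fun ω => Finset.univ.sup fun k : Fin (K N) =>
        (Finset.filter (fun i => X i ω ∈ B (K N) k) (Finset.range N)).card) ⁻¹'
          Set.Ici t)
    exact hsup_meas measurableSet_Ici
  have hf_meas : Measurable (fun ω => ((Finset.univ.sup fun k : Fin (K N) =>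
      (Finset.filter (fun i => X i ω ∈ B (K N) k) (Finset.range N)).card : ℕ) : ℝ)) :=
    measurable_from_top.comp hsup_meas
  have hsup_le : ∀ ω, (Finset.univ.sup fun k : Fin (K N) =>
      (Finset.filter (fun i => X i ω ∈ B (K N) k) (Finset.range N)).card) ≤ N :=
    fun ω => Finset.sup_le fun k _ =>
      le_trans (Finset.card_filter_le _ _) (Finset.card_range N).le
  have h_ptwise : ∀ ω, ((Finset.univ.sup fun k : Fin (K N) =>
      (Finset.filter (fun i => X i ω ∈ B (K N) k) (Finset.range N)).card : ℕ) : ℝ)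
        ≤ 2 * (m:ℝ) - 1 + (N:ℝ) * E.indicator 1 ω := by
    intro ω
    by_cases hω : ω ∈ E
    · rw [Set.indicator_of_mem hω]
      have h8 : ((Finset.univ.sup fun k : Fin (K N) =>
          (Finset.filter (fun i => X i ω ∈ B (K N) k) (Finset.range N)).card : ℕ) : ℝ)
          ≤ (N:ℝ) := by exact_mod_cast hsup_le ω
      simp only [Pi.one_apply]
      linarith
    · rw [Set.indicator_of_notMem hω, mul_zero, add_zero]
      rw [hE_def] at hω
      have h9 : ¬ (t ≤ Finset.univ.sup fun k : Fin (K N) =>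
          (Finset.filter (fun i => X i ω ∈ B (K N) k) (Finset.range N)).card) := hω
      have h10 : (Finset.univ.sup fun k : Fin (K N) =>
          (Finset.filter (fun i => X i ω ∈ B (K N) k) (Finset.range N)).card) + 1 ≤ t := by
        omega
      have h11 : ((Finset.univ.sup fun k : Fin (K N) =>
          (Finset.filter (fun i => X i ω ∈ B (K N) k) (Finset.range N)).card : ℕ) : ℝ) + 1
          ≤ (t : ℝ) := by exact_mod_cast h10
      have h12 : (t:ℝ) = 2 * (m:ℝ) := by rw [ht_def]; push_cast; ring
      linarith
  have hint_f : Integrable (fun ω => ((Finset.univ.sup fun k : Fin (K N) =>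
      (Finset.filter (fun i => X i ω ∈ B (K N) k) (Finset.range N)).card : ℕ) : ℝ)) ℙ := by
    refine Integrable.mono' (integrable_const (N:ℝ)) hf_meas.aestronglyMeasurable ?_
    refine Filter.Eventually.of_forall fun ω => ?_
    rw [Real.norm_eq_abs, abs_of_nonneg (by positivity)]
    exact_mod_cast hsup_le ω
  have hind : Integrable (fun ω => (N:ℝ) * E.indicator 1 ω) ℙ :=
    ((integrable_const (1:ℝ)).indicator hE_meas).const_mul _
  have hint_g : Integrable (fun ω => 2 * (m:ℝ) - 1 + (N:ℝ) * E.indicator 1 ω) ℙ :=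
    (integrable_const _).add hind
  have hgint : ∫ ω, (2 * (m:ℝ) - 1 + (N:ℝ) * E.indicator 1 ω) ∂ℙ
      = 2 * (m:ℝ) - 1 + (N:ℝ) * (ℙ E).toReal := by
    rw [integral_add (integrable_const _) hind, integral_const, integral_const_mul,
      integral_indicator_one hE_meas]
    simp [measure_univ, Measure.real]
  calc (∫ ω, ((Finset.univ.sup fun k : Fin (K N) =>
          (Finset.filter (fun i => X i ω ∈ B (K N) k) (Finset.range N)).card : ℕ) : ℝ))
      ≤ ∫ ω, (2 * (m:ℝ) - 1 + (N:ℝ) * E.indicator 1 ω) ∂ℙ :=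
        integral_mono hint_f hint_g h_ptwise
    _ = 2 * (m:ℝ) - 1 + (N:ℝ) * (ℙ E).toReal := hgint
    _ ≤ 2 * (m:ℝ) - 1 + 1 := by linarith
    _ ≤ 12 * L := by linarith
end

section
/- Let $(M_1, \ldots, M_{K'})$ be multinomial with parameters $N$, $K'$, and uniform probabilities $(1/K', \ldots, 1/K')$, and let $(N_1, \ldots, N_K)$ be multinomial with parameters $N$, $K$, and probabilities $(p_1, \ldots, p_K)$ satisfying $p_k \le 1/K'$ for all $k$ (where $K' \le K$). Then $\mathbb{E}[\max_{k=1,\ldots,K} N_k] \le \mathbb{E}[\max_{k=1,\ldots,K'} M_k]$. -/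
open MeasureTheory ProbabilityTheory
open scoped ENNReal

namespace Stmt5Aux
open Finset
variable {N K : ℕ}
def cnt (x : Fin N → Fin K) (k : Fin K) : ℕ := (Finset.filter (fun i => x i = k) Finset.univ).card
def Fmax (x : Fin N → Fin K) : ℕ := Finset.univ.sup (cnt x)
def Eval (N K : ℕ) (q : Fin K → ℝ) : ℝ :=
  ∑ x : Fin N → Fin K, (∏ i, q (x i)) * (Fmax x : ℝ)

lemma cnt_eq_sum (x : Fin N → Fin K) (k : Fin K) :
    cnt x k = ∑ i, if x i = k then 1 else 0 := by
  unfold cnt; rw [Finset.card_filter]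

lemma cnt_update_sum (x : Fin N → Fin K) (i : Fin N) (m k : Fin K) :
    cnt (Function.update x i m) k
      = (∑ j ∈ univ \ {i}, (if x j = k then 1 else 0)) + (if m = k then 1 else 0) := by
  rw [cnt_eq_sum]
  have h : (fun j => if Function.update x i m j = k then 1 else 0)
      = Function.update (fun j => if x j = k then (1:ℕ) else 0) i (if m = k then 1 else 0) := by
    funext j
    by_cases hj : j = i
    · subst hj; simp
    · simp [Function.update_of_ne hj]
  rw [h, Finset.sum_update_of_mem (Finset.mem_univ i), add_comm]

lemma cnt_split (x : Fin N → Fin K) (i : Fin N) (k : Fin K) :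
    cnt x k = (∑ j ∈ univ \ {i}, (if x j = k then 1 else 0)) + (if x i = k then 1 else 0) := by
  rw [cnt_eq_sum, Finset.sum_eq_sum_sdiff_singleton_add (Finset.mem_univ i)]

lemma cnt_update_add (x : Fin N → Fin K) (i : Fin N) {m : Fin K} (hm : x i ≠ m) :
    cnt (Function.update x i m) m = cnt x m + 1 := by
  rw [cnt_update_sum, cnt_split x i m]
  simp [hm]

lemma cnt_update_old (x : Fin N → Fin K) (i : Fin N) {m : Fin K} (hm : x i ≠ m) :
    cnt (Function.update x i m) (x i) + 1 = cnt x (x i) := by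
  rw [cnt_update_sum, cnt_split x i (x i)]
  simp [Ne.symm hm]

lemma cnt_update_other (x : Fin N → Fin K) (i : Fin N) {m k : Fin K} (h1 : k ≠ m) (h2 : k ≠ x i) :
    cnt (Function.update x i m) k = cnt x k := by
  rw [cnt_update_sum, cnt_split x i k]
  simp [Ne.symm h1, Ne.symm h2]


def wq (q : Fin K → ℝ) (a b : Fin K) (v : Fin K) : ℝ := if v = a ∨ v = b then 1 else q v

def cc (q : Fin K → ℝ) (a b : Fin K) (x : Fin N → Fin K) : ℝ := ∏ i, wq q a b (x i)

lemma wq_nonneg {q : Fin K → ℝ} (hq : ∀ k, 0 ≤ q k) (a b v : Fin K) : 0 ≤ wq q a b v := by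
  unfold wq
  split
  · norm_num
  · exact hq v

lemma cc_nonneg {q : Fin K → ℝ} (hq : ∀ k, 0 ≤ q k) (a b : Fin K) (x : Fin N → Fin K) :
    0 ≤ cc q a b x :=
  Finset.prod_nonneg fun i _ => wq_nonneg hq a b (x i)

lemma cc_update {q : Fin K → ℝ} {a b : Fin K} (x : Fin N → Fin K) (i : Fin N)
    (hx : x i = a ∨ x i = b) {m : Fin K} (hm : m = a ∨ m = b) :
    cc q a b (Function.update x i m) = cc q a b x := by
  unfold cc
  have h : (fun j => wq q a b (Function.update x i m j))
      = Function.update (fun j => wq q a b (x j)) i (wq q a b m) := by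
    funext j
    by_cases hj : j = i
    · subst hj; simp
    · simp [Function.update_of_ne hj]
  rw [h, Finset.prod_update_of_mem (Finset.mem_univ i),
    Finset.prod_eq_prod_diff_singleton_mul (Finset.mem_univ i) (fun j => wq q a b (x j))]
  have h1 : wq q a b m = 1 := by unfold wq; simp [hm]
  have h2 : wq q a b (x i) = 1 := by unfold wq; simp [hx]
  rw [h1, h2, one_mul, mul_one]

lemma prod_Q {q : Fin K → ℝ} {a b : Fin K} (hab : a ≠ b) (s t : ℝ) (x : Fin N → Fin K) :
    (∏ i, (if x i = a then t else if x i = b then s - t else q (x i)))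
      = cc q a b x * t ^ cnt x a * (s - t) ^ cnt x b := by
  have h : ∀ i, (if x i = a then t else if x i = b then s - t else q (x i))
      = wq q a b (x i) * ((if x i = a then t else 1) * (if x i = b then s - t else 1)) := by
    intro i
    unfold wq
    by_cases h1 : x i = a
    · have h2 : ¬ x i = b := by rw [h1]; exact hab
      simp [h1, h2, hab]
    · by_cases h2 : x i = b
      · simp [h1, h2, Ne.symm hab]
      · simp [h1, h2]
  rw [Finset.prod_congr rfl (fun i _ => h i), Finset.prod_mul_distrib, Finset.prod_mul_distrib]
  have ha : (∏ i, (if x i = a then t else 1)) = t ^ cnt x a := by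
    rw [Finset.prod_ite, Finset.prod_const, Finset.prod_const_one, mul_one]; rfl
  have hb : (∏ i, (if x i = b then s - t else 1)) = (s - t) ^ cnt x b := by
    rw [Finset.prod_ite, Finset.prod_const, Finset.prod_const_one, mul_one]; rfl
  rw [ha, hb, ← mul_assoc]
  rfl


lemma cnt_comp (σ : Equiv.Perm (Fin K)) (x : Fin N → Fin K) (k : Fin K) :
    cnt (fun i => σ (x i)) (σ k) = cnt x k := by
  unfold cnt
  congr 1
  apply Finset.filter_congr
  intro i _
  simp [σ.injective.eq_iff]

lemma Fmax_comp (σ : Equiv.Perm (Fin K)) (x : Fin N → Fin K) :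
    Fmax (fun i => σ (x i)) = Fmax x := by
  have h : ∀ k, cnt (fun i => σ (x i)) k = cnt x (σ.symm k) := by
    intro k
    have := cnt_comp σ x (σ.symm k)
    simpa using this
  unfold Fmax
  apply le_antisymm
  · apply Finset.sup_le
    intro k _
    rw [h k]
    exact Finset.le_sup (Finset.mem_univ _)
  · apply Finset.sup_le
    intro k _
    have := h (σ k)
    simp only [Equiv.symm_apply_apply] at this
    rw [← this]
    exact Finset.le_sup (Finset.mem_univ _)

lemma wq_swap {q : Fin K → ℝ} {a b : Fin K} (v : Fin K) :
    wq q a b (Equiv.swap a b v) = wq q a b v := by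
  unfold wq
  by_cases hva : v = a
  · subst hva; simp
  · by_cases hvb : v = b
    · subst hvb; simp
    · rw [Equiv.swap_apply_of_ne_of_ne hva hvb]

lemma cc_swap {q : Fin K → ℝ} {a b : Fin K} (y : Fin N → Fin K) :
    cc q a b (fun j => Equiv.swap a b (y j)) = cc q a b y := by
  unfold cc
  exact Finset.prod_congr rfl fun j _ => wq_swap (y j)

lemma pow_sub_sign {α β : ℝ} (hα : 0 ≤ α) (hαβ : α ≤ β) {j l : ℕ} (h : j ≤ l) :
    α ^ l * β ^ j ≤ α ^ j * β ^ l := by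
  obtain ⟨d, rfl⟩ := Nat.exists_eq_add_of_le h
  have hβ : 0 ≤ β := le_trans hα hαβ
  have h1 : α ^ d ≤ β ^ d := pow_le_pow_left₀ hα hαβ d
  have h2 : 0 ≤ α ^ j * β ^ j := mul_nonneg (pow_nonneg hα j) (pow_nonneg hβ j)
  calc α ^ (j + d) * β ^ j = (α ^ j * β ^ j) * α ^ d := by ring
    _ ≤ (α ^ j * β ^ j) * β ^ d := mul_le_mul_of_nonneg_left h1 h2
    _ = α ^ j * β ^ (j + d) := by ring

lemma sign_pair {α β r1 r2 : ℝ} (hα : 0 ≤ α) (hαβ : α ≤ β) {j l : ℕ}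
    (h1 : j ≤ l → r1 ≤ r2) (h2 : l < j → r2 ≤ r1) :
    (r1 - r2) * (α ^ j * β ^ l - α ^ l * β ^ j) ≤ 0 := by
  rcases le_or_gt j l with h | h
  · apply mul_nonpos_iff.mpr
    apply Or.inr
    constructor
    · linarith [h1 h]
    · linarith [pow_sub_sign hα hαβ h]
  · apply mul_nonpos_iff.mpr
    apply Or.inl
    constructor
    · linarith [h2 h]
    · linarith [pow_sub_sign hα hαβ (le_of_lt h)]

lemma pair_sum (m : Fin K) (f : (Fin N → Fin K) → ℝ) :
    ∑ p ∈ Finset.filter (fun p : (Fin N → Fin K) × Fin N => p.1 p.2 = m) Finset.univ, f p.1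
      = ∑ x : Fin N → Fin K, ∑ _i ∈ Finset.filter (fun i => x i = m) Finset.univ, f x := by
  rw [Finset.sum_filter, ← Finset.univ_product_univ, Finset.sum_product]
  apply Finset.sum_congr rfl
  intro x _
  rw [← Finset.sum_filter]

lemma dsum_nonpos {q : Fin K → ℝ} {a b : Fin K} (hq : ∀ k, 0 ≤ q k) (hab : a ≠ b)
    {s t : ℝ} (ht0 : 0 ≤ t) (hts : t ≤ s - t) :
    ∑ x : Fin N → Fin K, (cc q a b x * (Fmax x : ℝ)) *
      ((cnt x a : ℝ) * t ^ (cnt x a - 1) * (s - t) ^ cnt x b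
        - t ^ cnt x a * ((cnt x b : ℝ) * (s - t) ^ (cnt x b - 1))) ≤ 0 := by
  classical
  set Pa := Finset.filter (fun p : (Fin N → Fin K) × Fin N => p.1 p.2 = a) Finset.univ with hPa
  set Pb := Finset.filter (fun p : (Fin N → Fin K) × Fin N => p.1 p.2 = b) Finset.univ with hPb
  set U : (Fin N → Fin K) → ℝ :=
    fun x => cc q a b x * (Fmax x : ℝ) * t ^ (cnt x a - 1) * (s - t) ^ cnt x b with hU
  set V : (Fin N → Fin K) → ℝ :=
    fun x => cc q a b x * (Fmax x : ℝ) * t ^ cnt x a * (s - t) ^ (cnt x b - 1) with hV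
  have hsplit : ∑ x : Fin N → Fin K, (cc q a b x * (Fmax x : ℝ)) *
      ((cnt x a : ℝ) * t ^ (cnt x a - 1) * (s - t) ^ cnt x b
        - t ^ cnt x a * ((cnt x b : ℝ) * (s - t) ^ (cnt x b - 1)))
      = (∑ p ∈ Pa, U p.1) - (∑ p ∈ Pb, V p.1) := by
    rw [pair_sum a U, pair_sum b V, ← Finset.sum_sub_distrib]
    apply Finset.sum_congr rfl
    intro x _
    rw [Finset.sum_const, Finset.sum_const, nsmul_eq_mul, nsmul_eq_mul]
    have ha : ((Finset.filter (fun i => x i = a) Finset.univ).card : ℝ) = (cnt x a : ℝ) := rfl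
    have hb : ((Finset.filter (fun i => x i = b) Finset.univ).card : ℝ) = (cnt x b : ℝ) := rfl
    rw [ha, hb, hU, hV]
    ring
  rw [hsplit]
  -- rewrite the Pb sum as a sum over Pa
  have e3 : ∑ p ∈ Pb, V p.1 = ∑ p ∈ Pa,
      cc q a b p.1 * (Fmax (Function.update p.1 p.2 b) : ℝ)
        * t ^ (cnt p.1 a - 1) * (s - t) ^ cnt p.1 b := by
    apply Finset.sum_nbij' (i := fun p : (Fin N → Fin K) × Fin N => (Function.update p.1 p.2 a, p.2))
      (j := fun p : (Fin N → Fin K) × Fin N => (Function.update p.1 p.2 b, p.2))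
    · intro p hp
      rw [hPb, Finset.mem_filter] at hp
      rw [hPa, Finset.mem_filter]
      exact ⟨Finset.mem_univ _, by simp⟩
    · intro p hp
      rw [hPa, Finset.mem_filter] at hp
      rw [hPb, Finset.mem_filter]
      exact ⟨Finset.mem_univ _, by simp⟩
    · intro p hp
      rw [hPb, Finset.mem_filter] at hp
      have : Function.update (Function.update p.1 p.2 a) p.2 b = p.1 := by
        rw [Function.update_idem, ← hp.2, Function.update_eq_self]
      exact Prod.ext this rfl
    · intro p hp
      rw [hPa, Finset.mem_filter] at hp
      have : Function.update (Function.update p.1 p.2 b) p.2 a = p.1 := by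
        rw [Function.update_idem, ← hp.2, Function.update_eq_self]
      exact Prod.ext this rfl
    · intro p hp
      rw [hPb, Finset.mem_filter] at hp
      obtain ⟨-, hxi⟩ := hp
      set x := p.1
      set i := p.2
      have hxia : x i ≠ a := by rw [hxi]; exact Ne.symm hab
      have hcc : cc q a b (Function.update x i a) = cc q a b x :=
        cc_update x i (Or.inr hxi) (Or.inl rfl)
      have hFu : Function.update (Function.update x i a) i b = x := by
        rw [Function.update_idem, ← hxi, Function.update_eq_self]
      have hca : cnt (Function.update x i a) a = cnt x a + 1 := cnt_update_add x i hxia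
      have hcb : cnt (Function.update x i a) b + 1 = cnt x b := by
        have := cnt_update_old x i hxia
        rwa [hxi] at this
      rw [hV]
      simp only
      rw [hcc, hFu, hca, hcb.symm]
      have h1 : cnt x a + 1 - 1 = cnt x a := by omega
      have h2 : cnt (Function.update x i a) b + 1 - 1 = cnt (Function.update x i a) b := by omega
      rw [h1, h2]
  rw [e3, ← Finset.sum_sub_distrib]
  set T : (Fin N → Fin K) × Fin N → ℝ := fun p =>
    U p.1 - cc q a b p.1 * (Fmax (Function.update p.1 p.2 b) : ℝ)
      * t ^ (cnt p.1 a - 1) * (s - t) ^ cnt p.1 b with hT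
  show ∑ p ∈ Pa, T p ≤ 0
  -- the involution
  set ψ : (Fin N → Fin K) × Fin N → (Fin N → Fin K) × Fin N :=
    fun p => (fun j => Equiv.swap a b (Function.update p.1 p.2 b j), p.2) with hψ
  have hkey : ∀ p ∈ Pa, Function.update (ψ p).1 p.2 b = fun j => Equiv.swap a b (p.1 j) := by
    intro p hp
    rw [hPa, Finset.mem_filter] at hp
    funext j
    by_cases hj : j = p.2
    · subst hj
      rw [Function.update_self, hp.2, Equiv.swap_apply_left]
    · rw [Function.update_of_ne hj, hψ]
      simp only
      rw [Function.update_of_ne hj]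
  have hmem : ∀ p ∈ Pa, ψ p ∈ Pa := by
    intro p hp
    rw [hPa, Finset.mem_filter] at hp ⊢
    refine ⟨Finset.mem_univ _, ?_⟩
    rw [hψ]
    simp [Equiv.swap_apply_right]
  have hinv : ∀ p ∈ Pa, ψ (ψ p) = p := by
    intro p hp
    have h1 := hkey p hp
    apply Prod.ext
    · show (fun j => Equiv.swap a b (Function.update (ψ p).1 p.2 b j)) = p.1
      rw [h1]
      funext j
      simp
    · rfl
  have hsum2 : ∑ p ∈ Pa, T (ψ p) = ∑ p ∈ Pa, T p := by
    exact Finset.sum_nbij' ψ ψ hmem hmem hinv hinv (fun p _ => rfl)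
  have hpair : ∀ p ∈ Pa, T p + T (ψ p) ≤ 0 := by
    intro p hp
    have hxi : p.1 p.2 = a := (Finset.mem_filter.mp hp).2
    set x := p.1 with hx
    set i := p.2 with hi
    have hxib : x i ≠ b := by rw [hxi]; exact hab
    set u := Function.update x i b with hu
    have hcnt_pos : 0 < cnt x a := by
      have : (Finset.filter (fun i' => x i' = a) Finset.univ).Nonempty :=
        ⟨i, Finset.mem_filter.mpr ⟨Finset.mem_univ i, hxi⟩⟩
      exact Finset.card_pos.mpr this
    set j := cnt x a - 1 with hj
    set l := cnt x b with hl
    have hja : cnt x a = j + 1 := by omega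
    have hua : cnt u a + 1 = cnt x a := by
      have := cnt_update_old x i hxib
      rwa [hxi] at this
    have hub : cnt u b = l + 1 := cnt_update_add x i hxib
    have hψ1 : (ψ p).1 = fun j' => Equiv.swap a b (u j') := rfl
    have hccψ : cc q a b (ψ p).1 = cc q a b x := by
      rw [hψ1, cc_swap, hu, cc_update x i (Or.inl hxi) (Or.inr rfl)]
    have hcnta : cnt (ψ p).1 a = l + 1 := by
      have h2 := cnt_comp (Equiv.swap a b) u b
      rw [Equiv.swap_apply_right] at h2
      rw [hψ1, h2, hub]
    have hcntb : cnt (ψ p).1 b = cnt u a := by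
      have h2 := cnt_comp (Equiv.swap a b) u a
      rw [Equiv.swap_apply_left] at h2
      rw [hψ1, h2]
    have hFψ : Fmax (ψ p).1 = Fmax u := by
      rw [hψ1]; exact Fmax_comp (Equiv.swap a b) u
    have hFupd : Fmax (Function.update (ψ p).1 p.2 b) = Fmax x := by
      rw [hkey p hp]
      exact Fmax_comp (Equiv.swap a b) x
    have hother : ∀ k, k ≠ a → k ≠ b → cnt u k = cnt x k := by
      intro k hka hkb
      exact cnt_update_other x i hkb (by rw [hxi]; exact hka)
    have hF1 : j ≤ l → Fmax x ≤ Fmax u := by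
      intro hjl
      apply Finset.sup_le
      intro k _
      by_cases hka : k = a
      · subst hka
        calc cnt x k ≤ cnt u b := by omega
          _ ≤ Fmax u := Finset.le_sup (Finset.mem_univ b)
      · by_cases hkb : k = b
        · subst hkb
          calc cnt x k ≤ cnt u k := by omega
            _ ≤ Fmax u := Finset.le_sup (Finset.mem_univ k)
        · rw [← hother k hka hkb]
          exact Finset.le_sup (Finset.mem_univ k)
    have hF2 : l < j → Fmax u ≤ Fmax x := by
      intro hlj
      apply Finset.sup_le
      intro k _
      by_cases hka : k = a
      · subst hka
        calc cnt u k ≤ cnt x k := by omega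
          _ ≤ Fmax x := Finset.le_sup (Finset.mem_univ k)
      · by_cases hkb : k = b
        · subst hkb
          calc cnt u k ≤ cnt x a := by omega
            _ ≤ Fmax x := Finset.le_sup (Finset.mem_univ a)
        · rw [hother k hka hkb]
          exact Finset.le_sup (Finset.mem_univ k)
    have hTp : T p = cc q a b x * (t ^ j * (s - t) ^ l)
        * ((Fmax x : ℝ) - (Fmax u : ℝ)) := by
      change cc q a b x * ((Fmax x : ℕ) : ℝ) * t ^ j * (s - t) ^ l
          - cc q a b x * ((Fmax u : ℕ) : ℝ) * t ^ j * (s - t) ^ l = _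
      ring
    have hexp1 : cnt (ψ p).1 a - 1 = l := by omega
    have hexp2 : cnt (ψ p).1 b = j := by omega
    have hTψ : T (ψ p) = cc q a b x * (t ^ l * (s - t) ^ j)
        * ((Fmax u : ℝ) - (Fmax x : ℝ)) := by
      rw [hT]
      simp only [hU]
      have hψ2 : (ψ p).2 = p.2 := rfl
      rw [hψ2, hccψ, hexp1, hexp2, hFψ, hFupd]
      ring
    rw [hTp, hTψ]
    have hsign := sign_pair (r1 := ((Fmax x : ℕ) : ℝ)) (r2 := ((Fmax u : ℕ) : ℝ))
      ht0 hts (j := j) (l := l)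
      (fun h => Nat.cast_le.mpr (hF1 h)) (fun h => Nat.cast_le.mpr (hF2 h))
    have hccx := cc_nonneg hq a b x
    calc cc q a b x * (t ^ j * (s - t) ^ l) * ((Fmax x : ℝ) - (Fmax u : ℝ))
          + cc q a b x * (t ^ l * (s - t) ^ j) * ((Fmax u : ℝ) - (Fmax x : ℝ))
        = cc q a b x * (((Fmax x : ℝ) - (Fmax u : ℝ))
            * (t ^ j * (s - t) ^ l - t ^ l * (s - t) ^ j)) := by ring
      _ ≤ 0 := mul_nonpos_iff.mpr (Or.inl ⟨hccx, hsign⟩)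
  have h2 : (∑ p ∈ Pa, T p) + (∑ p ∈ Pa, T p) ≤ 0 := by
    calc (∑ p ∈ Pa, T p) + (∑ p ∈ Pa, T p)
        = (∑ p ∈ Pa, T p) + (∑ p ∈ Pa, T (ψ p)) := by rw [hsum2]
      _ = ∑ p ∈ Pa, (T p + T (ψ p)) := by rw [Finset.sum_add_distrib]
      _ ≤ 0 := Finset.sum_nonpos hpair
  linarith

def Qt (q : Fin K → ℝ) (a b : Fin K) (s t : ℝ) : Fin K → ℝ :=
  fun k => if k = a then t else if k = b then s - t else q k

lemma eval_Qt {q : Fin K → ℝ} {a b : Fin K} (hab : a ≠ b) (s t : ℝ) :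
    Eval N K (Qt q a b s t)
      = ∑ x : Fin N → Fin K, (cc q a b x * (Fmax x : ℝ))
          * (t ^ cnt x a * (s - t) ^ cnt x b) := by
  unfold Eval
  apply Finset.sum_congr rfl
  intro x _
  have h := prod_Q (q := q) hab s t x
  have h2 : (∏ i, Qt q a b s t (x i))
      = ∏ i, (if x i = a then t else if x i = b then s - t else q (x i)) := rfl
  rw [h2, h]
  ring

lemma hasDeriv_g {q : Fin K → ℝ} {a b : Fin K} (s t : ℝ) :
    HasDerivAt (fun t : ℝ => ∑ x : Fin N → Fin K,
        (cc q a b x * (Fmax x : ℝ)) * (t ^ cnt x a * (s - t) ^ cnt x b))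
      (∑ x : Fin N → Fin K, (cc q a b x * (Fmax x : ℝ)) *
        ((cnt x a : ℝ) * t ^ (cnt x a - 1) * (s - t) ^ cnt x b
          - t ^ cnt x a * ((cnt x b : ℝ) * (s - t) ^ (cnt x b - 1)))) t := by
  apply HasDerivAt.fun_sum
  intro x _
  have h1 : HasDerivAt (fun t : ℝ => t ^ cnt x a)
      ((cnt x a : ℝ) * t ^ (cnt x a - 1)) t := hasDerivAt_pow _ _
  have h2 : HasDerivAt (fun t : ℝ => (s - t) ^ cnt x b)
      ((cnt x b : ℝ) * (s - t) ^ (cnt x b - 1) * (0 - 1)) t :=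
    ((hasDerivAt_const t s).sub (hasDerivAt_id t)).pow _
  have h3 := (h1.fun_mul h2).const_mul (cc q a b x * (Fmax x : ℝ))
  exact h3.congr_deriv (by ring)

lemma transfer {q : Fin K → ℝ} {a b : Fin K} (hq : ∀ k, 0 ≤ q k) (hab : a ≠ b)
    (hle : q a ≤ q b) {ε : ℝ} (hε0 : 0 ≤ ε) (hεa : ε ≤ q a) :
    Eval N K q
      ≤ Eval N K (fun k => if k = a then q a - ε else if k = b then q b + ε else q k) := by
  set s := q a + q b with hs
  set g : ℝ → ℝ := fun t => ∑ x : Fin N → Fin K,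
    (cc q a b x * (Fmax x : ℝ)) * (t ^ cnt x a * (s - t) ^ cnt x b) with hg
  have hderiv : ∀ t : ℝ, HasDerivAt g (∑ x : Fin N → Fin K,
      (cc q a b x * (Fmax x : ℝ)) *
        ((cnt x a : ℝ) * t ^ (cnt x a - 1) * (s - t) ^ cnt x b
          - t ^ cnt x a * ((cnt x b : ℝ) * (s - t) ^ (cnt x b - 1)))) t :=
    fun t => hasDeriv_g s t
  have hdiff : Differentiable ℝ g := fun t => (hderiv t).differentiableAt
  have hanti : AntitoneOn g (Set.Icc 0 (s / 2)) := by
    apply antitoneOn_of_deriv_nonpos (convex_Icc 0 (s / 2))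
      hdiff.continuous.continuousOn hdiff.differentiableOn
    intro t ht
    rw [interior_Icc] at ht
    rw [(hderiv t).deriv]
    exact dsum_nonpos hq hab (le_of_lt ht.1) (by linarith [ht.2])
  have e1 : Eval N K q = g (q a) := by
    have hqq : q = Qt q a b s (q a) := by
      funext k
      unfold Qt
      by_cases h1 : k = a
      · subst h1; simp
      · by_cases h2 : k = b
        · subst h2
          rw [if_neg h1, if_pos rfl, hs]
          ring
        · rw [if_neg h1, if_neg h2]
    conv_lhs => rw [hqq]
    rw [eval_Qt hab]
  have e2 : Eval N K (fun k => if k = a then q a - ε else if k = b then q b + ε else q k)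
      = g (q a - ε) := by
    have hqq : (fun k => if k = a then q a - ε else if k = b then q b + ε else q k)
        = Qt q a b s (q a - ε) := by
      funext k
      unfold Qt
      by_cases h1 : k = a
      · subst h1; simp
      · by_cases h2 : k = b
        · subst h2
          rw [if_neg h1, if_pos rfl, if_neg h1, if_pos rfl, hs]
          ring
        · rw [if_neg h1, if_neg h2, if_neg h1, if_neg h2]
    rw [hqq, eval_Qt hab]
  rw [e1, e2]
  have hm1 : q a - ε ∈ Set.Icc (0 : ℝ) (s / 2) := by
    constructor
    · linarith
    · rw [hs]; linarith
  have hm2 : q a ∈ Set.Icc (0 : ℝ) (s / 2) := by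
    constructor
    · exact hq a
    · rw [hs]; linarith
  exact hanti hm1 hm2 (by linarith)

variable {K' : ℕ}

lemma cnt_inj (ι : Fin K' → Fin K) (hι : Function.Injective ι) (y : Fin N → Fin K') (k' : Fin K') :
    cnt (fun i => ι (y i)) (ι k') = cnt y k' := by
  unfold cnt; congr 1; apply Finset.filter_congr; intro i _; simp [hι.eq_iff]

lemma Fmax_inj (ι : Fin K' → Fin K) (hι : Function.Injective ι) (y : Fin N → Fin K') :
    Fmax (fun i => ι (y i)) = Fmax y := by
  unfold Fmax
  apply le_antisymm
  · apply Finset.sup_le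
    intro k _
    by_cases hk : k ∈ Set.range ι
    · obtain ⟨k', rfl⟩ := hk
      rw [cnt_inj ι hι]
      exact Finset.le_sup (Finset.mem_univ _)
    · have : cnt (fun i => ι (y i)) k = 0 := by
        unfold cnt
        rw [Finset.card_eq_zero, Finset.filter_eq_empty_iff]
        intro i _
        exact fun h => hk ⟨y i, h⟩
      simp [this]
  · apply Finset.sup_le
    intro k' _
    rw [← cnt_inj ι hι y k']
    exact Finset.le_sup (Finset.mem_univ _)

lemma eval_inj (ι : Fin K' → Fin K) (hι : Function.Injective ι) (q : Fin K → ℝ)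
    (h0 : ∀ k, k ∉ Set.range ι → q k = 0) :
    Eval N K q = Eval N K' (fun k' => q (ι k')) := by
  classical
  unfold Eval
  set S : Finset (Fin N → Fin K) := Finset.univ.image (fun y : Fin N → Fin K' => fun i => ι (y i))
    with hS
  rw [← Finset.sum_subset (Finset.subset_univ S)]
  · rw [Finset.sum_image]
    · apply Finset.sum_congr rfl
      intro y _
      rw [Fmax_inj ι hι]
    · intro y1 _ y2 _ h
      funext i
      exact hι (congrFun h i)
  · intro x _ hx
    have : ∃ i, x i ∉ Set.range ι := by
      by_contra hall
      push_neg at hall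
      apply hx
      rw [hS, Finset.mem_image]
      refine ⟨fun i => (hall i).choose, Finset.mem_univ _, ?_⟩
      funext i
      exact (hall i).choose_spec
    obtain ⟨i, hi⟩ := this
    rw [Finset.prod_eq_zero (Finset.mem_univ i) (h0 _ hi), zero_mul]



lemma sum_q' {q : Fin K → ℝ} {a b : Fin K} (hab : a ≠ b) (ε : ℝ) :
    ∑ k, (fun k => if k = a then q a - ε else if k = b then q b + ε else q k) k
      = ∑ k, q k := by
  have hupd : (fun k => if k = a then q a - ε else if k = b then q b + ε else q k)
      = Function.update (Function.update q a (q a - ε)) b (q b + ε) := by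
    funext k
    by_cases h1 : k = a
    · subst h1
      rw [if_pos rfl, Function.update_of_ne hab, Function.update_self]
    · by_cases h2 : k = b
      · subst h2
        rw [if_neg h1, if_pos rfl, Function.update_self]
      · rw [if_neg h1, if_neg h2, Function.update_of_ne h2, Function.update_of_ne h1]
  rw [hupd]
  rw [Finset.sum_update_of_mem (Finset.mem_univ b)]
  have hamem : a ∈ Finset.univ \ {b} :=
    Finset.mem_sdiff.mpr ⟨Finset.mem_univ a, by simp [hab]⟩
  rw [Finset.sum_eq_sum_sdiff_singleton_add hamem (Function.update q a (q a - ε)),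
    Function.update_self]
  have h3 : ∑ k ∈ (Finset.univ \ {b}) \ {a}, Function.update q a (q a - ε) k
      = ∑ k ∈ (Finset.univ \ {b}) \ {a}, q k := by
    apply Finset.sum_congr rfl
    intro k hk
    rw [Finset.mem_sdiff] at hk
    have : k ≠ a := by simpa using hk.2
    rw [Function.update_of_ne this]
  rw [h3]
  rw [Finset.sum_eq_sum_sdiff_singleton_add (Finset.mem_univ b) q,
    Finset.sum_eq_sum_sdiff_singleton_add hamem q]
  ring

lemma step {q : Fin K → ℝ} (hq0 : ∀ k, 0 ≤ q k) (hqle : ∀ k, q k ≤ 1 / (K' : ℝ))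
    {a b : Fin K} (hab : a ≠ b)
    (ha : q a ≠ 0 ∧ q a ≠ 1 / (K' : ℝ)) (hb : q b ≠ 0 ∧ q b ≠ 1 / (K' : ℝ))
    (hle : q a ≤ q b) :
    ∃ q' : Fin K → ℝ, (∀ k, 0 ≤ q' k) ∧ (∑ k, q' k = ∑ k, q k) ∧
      (∀ k, q' k ≤ 1 / (K' : ℝ)) ∧ Eval N K q ≤ Eval N K q' ∧
      (Finset.filter (fun k => q' k ≠ 0 ∧ q' k ≠ 1 / (K' : ℝ)) Finset.univ).card
        < (Finset.filter (fun k => q k ≠ 0 ∧ q k ≠ 1 / (K' : ℝ)) Finset.univ).card := by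
  have hqa : 0 < q a := lt_of_le_of_ne (hq0 a) (Ne.symm ha.1)
  have hqb : q b < 1 / (K' : ℝ) := lt_of_le_of_ne (hqle b) hb.2
  set ε := min (q a) (1 / (K' : ℝ) - q b) with hε
  have hε0 : 0 ≤ ε := le_min (le_of_lt hqa) (by linarith)
  have hεa : ε ≤ q a := min_le_left _ _
  have hεb : ε ≤ 1 / (K' : ℝ) - q b := min_le_right _ _
  set q' : Fin K → ℝ := fun k => if k = a then q a - ε else if k = b then q b + ε else q k
    with hq'
  refine ⟨q', ?_, sum_q' hab ε, ?_, transfer hq0 hab hle hε0 hεa, ?_⟩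
  · intro k
    simp only [hq']
    by_cases h1 : k = a
    · rw [if_pos h1]; linarith
    · by_cases h2 : k = b
      · rw [if_neg h1, if_pos h2]; linarith [hq0 b]
      · rw [if_neg h1, if_neg h2]; exact hq0 k
  · intro k
    simp only [hq']
    by_cases h1 : k = a
    · rw [if_pos h1]; linarith [hqle a]
    · by_cases h2 : k = b
      · rw [if_neg h1, if_pos h2]; linarith
      · rw [if_neg h1, if_neg h2]; exact hqle k
  · set I := Finset.filter (fun k => q k ≠ 0 ∧ q k ≠ 1 / (K' : ℝ)) Finset.univ with hI
    have haI : a ∈ I := Finset.mem_filter.mpr ⟨Finset.mem_univ a, ha⟩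
    have hbI : b ∈ I := Finset.mem_filter.mpr ⟨Finset.mem_univ b, hb⟩
    have hsub : ∃ c ∈ I,
        Finset.filter (fun k => q' k ≠ 0 ∧ q' k ≠ 1 / (K' : ℝ)) Finset.univ
          ⊆ I.erase c := by
      rcases le_total (q a) (1 / (K' : ℝ) - q b) with hmin | hmin
      · refine ⟨a, haI, ?_⟩
        intro k hk
        rw [Finset.mem_filter] at hk
        have hεqa : ε = q a := min_eq_left hmin
        have hka : k ≠ a := by
          intro hka
          have h5 : q' k = q a - ε := by simp only [hq', if_pos hka]
          exact hk.2.1 (by rw [h5, hεqa]; ring)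
        apply Finset.mem_erase.mpr
        refine ⟨hka, ?_⟩
        by_cases h2 : k = b
        · subst h2; exact hbI
        · apply Finset.mem_filter.mpr
          refine ⟨Finset.mem_univ k, ?_⟩
          have h5 : q' k = q k := by simp only [hq', if_neg hka, if_neg h2]
          rw [← h5]
          exact hk.2
      · refine ⟨b, hbI, ?_⟩
        intro k hk
        rw [Finset.mem_filter] at hk
        have hεqb : ε = 1 / (K' : ℝ) - q b := min_eq_right hmin
        have hkb : k ≠ b := by
          intro hkb
          have hkba : k ≠ a := by rw [hkb]; exact Ne.symm hab
          have h5 : q' k = q b + ε := by simp only [hq', if_neg hkba, if_pos hkb]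
          exact hk.2.2 (by rw [h5, hεqb]; ring)
        apply Finset.mem_erase.mpr
        refine ⟨hkb, ?_⟩
        by_cases h1 : k = a
        · subst h1; exact haI
        · apply Finset.mem_filter.mpr
          refine ⟨Finset.mem_univ k, ?_⟩
          have h5 : q' k = q k := by simp only [hq', if_neg h1, if_neg hkb]
          rw [← h5]
          exact hk.2
    obtain ⟨c, hcI, hsub⟩ := hsub
    calc (Finset.filter (fun k => q' k ≠ 0 ∧ q' k ≠ 1 / (K' : ℝ)) Finset.univ).card
        ≤ (I.erase c).card := Finset.card_le_card hsub
      _ < I.card := Finset.card_erase_lt_of_mem hcI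


lemma base_case (hK' : 0 < K') {q : Fin K → ℝ} (hqs : ∑ k, q k = 1)
    (hbd : ∀ k, q k = 0 ∨ q k = 1 / (K' : ℝ)) :
    Eval N K q = Eval N K' (fun _ => 1 / (K' : ℝ)) := by
  classical
  have hK'R : (0 : ℝ) < (K' : ℝ) := by exact_mod_cast hK'
  set S := Finset.filter (fun k => q k ≠ 0) Finset.univ with hS
  have hmemS : ∀ k ∈ S, q k = 1 / (K' : ℝ) := by
    intro k hk
    rcases hbd k with h | h
    · exact absurd h (Finset.mem_filter.mp hk).2
    · exact h
  have h1 : ∑ k ∈ S, q k = 1 := by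
    rw [hS, Finset.sum_filter_ne_zero, hqs]
  have h2 : (S.card : ℝ) * (1 / (K' : ℝ)) = 1 := by
    calc (S.card : ℝ) * (1 / (K' : ℝ)) = ∑ k ∈ S, q k := by
          rw [Finset.sum_congr rfl hmemS, Finset.sum_const, nsmul_eq_mul]
      _ = 1 := h1
  have hcard : S.card = K' := by
    have hne : (K' : ℝ) ≠ 0 := ne_of_gt hK'R
    rw [mul_one_div, div_eq_one_iff_eq hne] at h2
    exact_mod_cast h2
  set ι : Fin K' → Fin K := fun k' => (S.equivFin.symm (Fin.cast hcard.symm k')).1 with hι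
  have hinj : Function.Injective ι := by
    intro k1 k2 h
    have h3 : S.equivFin.symm (Fin.cast hcard.symm k1) = S.equivFin.symm (Fin.cast hcard.symm k2) :=
      Subtype.ext h
    have h4 := S.equivFin.symm.injective h3
    have h5 : (Fin.cast hcard.symm k1 : ℕ) = (Fin.cast hcard.symm k2 : ℕ) := by rw [h4]
    exact Fin.ext h5
  have hrange : ∀ k, k ∉ Set.range ι → q k = 0 := by
    intro k hk
    by_contra hne
    apply hk
    have hkS : k ∈ S := Finset.mem_filter.mpr ⟨Finset.mem_univ k, hne⟩
    refine ⟨Fin.cast hcard (S.equivFin ⟨k, hkS⟩), ?_⟩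
    rw [hι]
    simp
  rw [eval_inj ι hinj q hrange]
  congr 1
  funext k'
  apply hmemS
  exact (S.equivFin.symm (Fin.cast hcard.symm k')).2

lemma single_interior_false (hK' : 0 < K') {q : Fin K → ℝ} (hq0 : ∀ k, 0 ≤ q k)
    (hqs : ∑ k, q k = 1) (hqle : ∀ k, q k ≤ 1 / (K' : ℝ)) {a : Fin K}
    (ha : q a ≠ 0 ∧ q a ≠ 1 / (K' : ℝ))
    (huniq : ∀ k, (q k ≠ 0 ∧ q k ≠ 1 / (K' : ℝ)) → k = a) : False := by
  classical
  have hK'R : (0 : ℝ) < (K' : ℝ) := by exact_mod_cast hK'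
  have hqa : 0 < q a := lt_of_le_of_ne (hq0 a) (Ne.symm ha.1)
  have hqa2 : q a < 1 / (K' : ℝ) := lt_of_le_of_ne (hqle a) ha.2
  set J := Finset.filter (fun k => q k = 1 / (K' : ℝ)) Finset.univ with hJ
  have haJ : a ∉ J := by
    intro h
    exact ha.2 (Finset.mem_filter.mp h).2
  have hsplit := Finset.sum_filter_add_sum_filter_not Finset.univ
    (fun k => q k = 1 / (K' : ℝ)) q
  have hA : ∑ k ∈ Finset.filter (fun k => q k = 1 / (K' : ℝ)) Finset.univ, q k
      = (J.card : ℝ) * (1 / (K' : ℝ)) := by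
    rw [Finset.sum_congr rfl (fun k hk => (Finset.mem_filter.mp hk).2),
      Finset.sum_const, nsmul_eq_mul]
  have hB : ∑ k ∈ Finset.filter (fun k => ¬ q k = 1 / (K' : ℝ)) Finset.univ, q k = q a := by
    rw [Finset.sum_eq_single a]
    · intro c hc hca
      rw [Finset.mem_filter] at hc
      by_contra hc0
      exact hca (huniq c ⟨hc0, hc.2⟩)
    · intro hna
      exfalso
      apply hna
      rw [Finset.mem_filter]
      exact ⟨Finset.mem_univ a, ha.2⟩
  have hsum : (J.card : ℝ) * (1 / (K' : ℝ)) + q a = 1 := by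
    rw [← hA, ← hB] at *
    rw [hsplit, hqs]
  have h3 : (J.card : ℝ) = (1 - q a) * (K' : ℝ) := by
    have h4 : (J.card : ℝ) * (1 / (K' : ℝ)) = 1 - q a := by linarith
    rwa [mul_one_div, div_eq_iff (ne_of_gt hK'R)] at h4
  have h5 : q a * (K' : ℝ) < 1 := by
    have := mul_lt_mul_of_pos_right hqa2 hK'R
    rwa [one_div_mul_cancel (ne_of_gt hK'R)] at this
  have h1 : (J.card : ℝ) < (K' : ℝ) := by nlinarith
  have h2 : (K' : ℝ) < (J.card : ℝ) + 1 := by nlinarith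
  have h1' : J.card < K' := by exact_mod_cast h1
  have h2' : K' < J.card + 1 := by exact_mod_cast h2
  omega


lemma main_aux (hK' : 0 < K') :
    ∀ (n : ℕ) (q : Fin K → ℝ), (∀ k, 0 ≤ q k) → (∑ k, q k = 1) →
      (∀ k, q k ≤ 1 / (K' : ℝ)) →
      (Finset.filter (fun k => q k ≠ 0 ∧ q k ≠ 1 / (K' : ℝ)) Finset.univ).card ≤ n →
      Eval N K q ≤ Eval N K' (fun _ => 1 / (K' : ℝ)) := by
  intro n
  induction n with
  | zero =>
    intro q hq0 hqs hqle hcard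
    have hbd : ∀ k, q k = 0 ∨ q k = 1 / (K' : ℝ) := by
      intro k
      by_contra h
      push_neg at h
      have hk : k ∈ Finset.filter (fun k => q k ≠ 0 ∧ q k ≠ 1 / (K' : ℝ)) Finset.univ :=
        Finset.mem_filter.mpr ⟨Finset.mem_univ k, h.1, h.2⟩
      rw [Nat.le_zero, Finset.card_eq_zero] at hcard
      rw [hcard] at hk
      exact absurd hk (Finset.notMem_empty k)
    exact le_of_eq (base_case hK' hqs hbd)
  | succ n ih =>
    intro q hq0 hqs hqle hcard
    by_cases hn : (Finset.filter (fun k => q k ≠ 0 ∧ q k ≠ 1 / (K' : ℝ)) Finset.univ).card ≤ n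
    · exact ih q hq0 hqs hqle hn
    · have hpos : 0 < (Finset.filter (fun k => q k ≠ 0 ∧ q k ≠ 1 / (K' : ℝ)) Finset.univ).card := by
        omega
      obtain ⟨a, haI⟩ := Finset.card_pos.mp hpos
      have ha := (Finset.mem_filter.mp haI).2
      by_cases hex : ∃ b, (q b ≠ 0 ∧ q b ≠ 1 / (K' : ℝ)) ∧ b ≠ a
      · obtain ⟨b, hb, hba⟩ := hex
        rcases le_total (q a) (q b) with hle | hle
        · obtain ⟨q', h0, hsum', hle', hEv, hlt⟩ := step hq0 hqle (Ne.symm hba) ha hb hle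
          apply le_trans hEv
          exact ih q' h0 (by rw [hsum', hqs]) hle' (by omega)
        · obtain ⟨q', h0, hsum', hle', hEv, hlt⟩ := step hq0 hqle hba hb ha hle
          apply le_trans hEv
          exact ih q' h0 (by rw [hsum', hqs]) hle' (by omega)
      · exfalso
        push_neg at hex
        apply single_interior_false hK' hq0 hqs hqle ha
        intro k hk
        exact hex k hk

lemma main_comb (N : ℕ) (hK' : 0 < K') (q : Fin K → ℝ) (hq0 : ∀ k, 0 ≤ q k)
    (hqs : ∑ k, q k = 1) (hqle : ∀ k, q k ≤ 1 / (K' : ℝ)) :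
    Eval N K q ≤ Eval N K' (fun _ => 1 / (K' : ℝ)) :=
  main_aux hK' _ q hq0 hqs hqle le_rfl


open MeasureTheory ProbabilityTheory in
lemma integral_eq_eval {Ω : Type*} [MeasureSpace Ω] [IsProbabilityMeasure (ℙ : Measure Ω)]
    (N K : ℕ) (q : Fin K → ℝ) (hq0 : ∀ k, 0 ≤ q k)
    (X : Fin N → Ω → Fin K) (hmeas : ∀ i, Measurable (X i))
    (hindep : iIndepFun X ℙ)
    (hlaw : ∀ i k, ℙ {ω | X i ω = k} = ENNReal.ofReal (q k)) :
    (∫ ω, ((Finset.univ.sup fun k : Fin K =>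
        (Finset.filter (fun i => X i ω = k) Finset.univ).card : ℕ) : ℝ)) = Eval N K q := by
  classical
  set Y : Ω → (Fin N → Fin K) := fun ω i => X i ω with hY
  have hYm : Measurable Y := measurable_pi_lambda _ hmeas
  have h1 : (∫ ω, ((Finset.univ.sup fun k : Fin K =>
        (Finset.filter (fun i => X i ω = k) Finset.univ).card : ℕ) : ℝ))
      = ∫ ω, (Fmax (Y ω) : ℝ) := rfl
  rw [h1]
  rw [← integral_map hYm.aemeasurable
    ((measurable_of_countable (fun y : Fin N → Fin K => (Fmax y : ℝ))).aestronglyMeasurable)]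
  rw [integral_fintype (Integrable.of_finite)]
  unfold Eval
  apply Finset.sum_congr rfl
  intro y _
  have h2 : Measure.map Y ℙ {y} = ∏ i, ENNReal.ofReal (q (y i)) := by
    rw [Measure.map_apply hYm (MeasurableSet.singleton y)]
    have h3 : Y ⁻¹' {y} = ⋂ i, (X i) ⁻¹' {y i} := by
      ext ω
      simp only [Set.mem_preimage, Set.mem_singleton_iff, Set.mem_iInter]
      constructor
      · intro h i
        rw [← h]
      · intro h
        funext i
        exact h i
    rw [h3, hindep.meas_iInter]
    · apply Finset.prod_congr rfl
      intro i _
      have := hlaw i (y i)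
      rw [← this]
      rfl
    · intro i
      exact ⟨{y i}, MeasurableSet.singleton (y i), rfl⟩
  rw [Measure.real, h2, ENNReal.toReal_prod]
  have h4 : ∀ i, (ENNReal.ofReal (q (y i))).toReal = q (y i) :=
    fun i => ENNReal.toReal_ofReal (hq0 (y i))
  rw [Finset.prod_congr rfl (fun i _ => h4 i), smul_eq_mul]

end Stmt5Aux

/-- Domination of expected maxima of multinomial cell counts: if `(N_1, …, N_K)` is
multinomial with parameters `N` and `(p_1, …, p_K)` with `p_k ≤ 1/K'` for all `k`
(`K' ≤ K`), and `(M_1, …, M_{K'})` is multinomial with parameters `N`, `K'` and uniform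
probabilities, then `E[max_k N_k] ≤ E[max_k M_k]`. The multinomial vectors are realized
as cell counts of i.i.d. categorical variables `ξ` resp. `η`. -/
theorem stmt5
    {Ω : Type*} [MeasureSpace Ω] [IsProbabilityMeasure (ℙ : Measure Ω)]
    (N K K' : ℕ) (hK' : 0 < K') (hKK' : K' ≤ K)
    (p : Fin K → ℝ) (hp_nonneg : ∀ k, 0 ≤ p k) (hp_sum : ∑ k, p k = 1)
    (hp_le : ∀ k, p k ≤ 1 / K')
    (ξ : Fin N → Ω → Fin K) (hξ_meas : ∀ i, Measurable (ξ i))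
    (hξ_indep : iIndepFun ξ ℙ)
    (hξ_law : ∀ i k, ℙ {ω | ξ i ω = k} = ENNReal.ofReal (p k))
    (η : Fin N → Ω → Fin K') (hη_meas : ∀ i, Measurable (η i))
    (hη_indep : iIndepFun η ℙ)
    (hη_law : ∀ i k, ℙ {ω | η i ω = k} = 1 / (K' : ℝ≥0∞)) :
    (∫ ω, ((Finset.univ.sup fun k : Fin K =>
        (Finset.filter (fun i => ξ i ω = k) Finset.univ).card : ℕ) : ℝ))
      ≤ ∫ ω, ((Finset.univ.sup fun k : Fin K' =>
        (Finset.filter (fun i => η i ω = k) Finset.univ).card : ℕ) : ℝ) := by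
  have hK'R : (0 : ℝ) < (K' : ℝ) := by exact_mod_cast hK'
  have hη_law' : ∀ i k, ℙ {ω | η i ω = k} = ENNReal.ofReal (1 / (K' : ℝ)) := by
    intro i k
    rw [hη_law i k, ENNReal.ofReal_div_of_pos hK'R, ENNReal.ofReal_one, ENNReal.ofReal_natCast]
  have h1 := Stmt5Aux.integral_eq_eval N K p hp_nonneg ξ hξ_meas hξ_indep hξ_law
  have h2 := Stmt5Aux.integral_eq_eval N K' (fun _ => 1 / (K' : ℝ))
    (fun _ => by positivity) η hη_meas hη_indep hη_law'
  rw [h1, h2]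
  exact Stmt5Aux.main_comb N hK' p hp_nonneg hp_sum hp_le
end
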